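/- arXiv:1310.1289 — 8 statements merged into one kernel-verified Lean document; each statement's English description precedes it below -/
import Mathlib

section
/- Let K be a δσ-field of characteristic zero and let L|K be a δσ-field extension with L^δ = K^δ =: k. Let a₁,…,aₙ ∈ K∖{0} and z₁,…,zₙ ∈ L∖{0} satisfy δ(z_i) = a_i·z_i for i = 1,…,n. Then z₁,…,zₙ are transformally dependent over K if and only if there exist s ∈ ℕ, integers r_{i,j} ∈ ℤ (1 ≤ i ≤ n, 0 ≤ j ≤ s) not all zero, and a nonzero g ∈ K such that Σ_{i=1}^{n} Σ_{j=0}^{s} r_{i,j}·ℏ_j·σ^j(a_i) = δ(g)/g. -/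
open Finset MvPolynomial

section DerivHelpers
variable {L : Type*} [Field L] (δ : L → L)

lemma dAdd_zero (hadd : ∀ a b : L, δ (a + b) = δ a + δ b) : δ 0 = 0 := by
  have h := hadd 0 0
  simp only [add_zero] at h
  exact (left_eq_add.mp h)

lemma dMul_one (hmul : ∀ a b : L, δ (a * b) = a * δ b + δ a * b) : δ 1 = 0 := by
  have h := hmul 1 1
  simp only [mul_one, one_mul] at h
  exact left_eq_add.mp h

lemma dSum (hadd : ∀ a b : L, δ (a + b) = δ a + δ b) {ι : Type*}
    (S : Finset ι) (f : ι → L) : δ (∑ k ∈ S, f k) = ∑ k ∈ S, δ (f k) := by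
  classical
  induction S using Finset.cons_induction with
  | empty => simpa using dAdd_zero δ hadd
  | cons i S hi ih => rw [Finset.sum_cons, Finset.sum_cons, hadd, ih]

lemma dPow (hmul : ∀ a b : L, δ (a * b) = a * δ b + δ a * b) {x β : L}
    (hx : δ x = β * x) (m : ℕ) : δ (x ^ m) = (m : L) * β * x ^ m := by
  induction m with
  | zero => simpa using dMul_one δ hmul
  | succ m ih =>
      have h : x ^ (m + 1) = x ^ m * x := by ring
      rw [h, hmul, ih, hx]
      push_cast
      ring

lemma dProd (hmul : ∀ a b : L, δ (a * b) = a * δ b + δ a * b) {ι : Type*}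
    (S : Finset ι) (x β : ι → L) (m : ι → ℕ)
    (hx : ∀ k ∈ S, δ (x k) = β k * x k) :
    δ (∏ k ∈ S, x k ^ m k) = (∑ k ∈ S, (m k : L) * β k) * ∏ k ∈ S, x k ^ m k := by
  classical
  induction S using Finset.cons_induction with
  | empty => simpa using dMul_one δ hmul
  | cons i S hi ih =>
      rw [Finset.prod_cons, Finset.sum_cons, hmul,
        ih (fun k hk => hx k (Finset.mem_cons_of_mem hk)),
        dPow δ hmul (hx i (Finset.mem_cons_self i S))]
      ring

lemma dInv (hmul : ∀ a b : L, δ (a * b) = a * δ b + δ a * b) {x : L}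
    (hx0 : x ≠ 0) : δ x⁻¹ = - δ x * x⁻¹ * x⁻¹ := by
  have h := hmul x x⁻¹
  rw [mul_inv_cancel₀ hx0, dMul_one δ hmul] at h
  have h2 : x * δ x⁻¹ = -(δ x * x⁻¹) := by linear_combination -h
  have h3 := congrArg (fun t => x⁻¹ * t) h2
  rw [← mul_assoc, inv_mul_cancel₀ hx0, one_mul] at h3
  rw [h3]; ring

end DerivHelpers

/-- The sequence `ℏ_j`: `ℏ_0 = 1`, `ℏ_{j+1} = ℏ · σ(ℏ_j)`, so that `δ∘σ^j = ℏ_j·σ^j∘δ`. -/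
def hbarSeq {K : Type*} [Field K] (σ : K →+* K) (ℏ : K) : ℕ → K
  | 0 => 1
  | j + 1 => ℏ * σ (hbarSeq σ ℏ j)

/-- σ-analogue of Kolchin's theorem.  For nonzero solutions of
`δ(z i) = a i · z i` in a δσ-field extension `L|K` with `L^δ = K^δ`, the `z i` are
transformally dependent over `K` iff some nontrivial integer linear combination
`Σ r_{i,j}·ℏ_j·σ^j(a i)` is a logarithmic derivative `δ(g)/g` with `g ∈ K∖{0}`. -/
theorem stmt_1 {K L : Type*} [Field K] [Field L] [Algebra K L] [CharZero K]
    (δK : K → K) (σK : K →+* K) (δL : L → L) (σL : L →+* L) (ℏ : K)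
    (hδLadd : ∀ a b : L, δL (a + b) = δL a + δL b)
    (hδLmul : ∀ a b : L, δL (a * b) = a * δL b + δL a * b)
    (hδcompat : ∀ a : K, δL (algebraMap K L a) = algebraMap K L (δK a))
    (hσcompat : ∀ a : K, σL (algebraMap K L a) = algebraMap K L (σK a))
    (hℏ0 : ℏ ≠ 0) (hδℏ : δK ℏ = 0)
    (hcomm : ∀ r : L, δL (σL r) = algebraMap K L ℏ * σL (δL r))
    (hconst : ∀ x : L, δL x = 0 → ∃ c : K, δK c = 0 ∧ x = algebraMap K L c)
    (n : ℕ) (a : Fin n → K) (z : Fin n → L)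
    (ha : ∀ i, a i ≠ 0) (hz0 : ∀ i, z i ≠ 0)
    (hz : ∀ i, δL (z i) = algebraMap K L (a i) * z i) :
    (¬ AlgebraicIndependent K fun p : Fin n × ℕ => (⇑σL)^[p.2] (z p.1)) ↔
      ∃ (s : ℕ) (r : Fin n → ℕ → ℤ) (g : K),
        (∃ i, ∃ j ≤ s, r i j ≠ 0) ∧ g ≠ 0 ∧
        ∑ i : Fin n, ∑ j ∈ Finset.range (s + 1),
          (r i j : K) * hbarSeq σK ℏ j * (⇑σK)^[j] (a i) = δK g / g := by
  classical
  have halg : Function.Injective (algebraMap K L) := (algebraMap K L).injective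
  have hδL0 : δL 0 = 0 := dAdd_zero δL hδLadd
  have hδKmul : ∀ u v : K, δK (u * v) = u * δK v + δK u * v := by
    intro u v
    apply halg
    rw [← hδcompat, map_mul, hδLmul, hδcompat, hδcompat, map_add, map_mul, map_mul]
  -- the family and its "eigenvalues"
  set w : Fin n × ℕ → L := fun p => (⇑σL)^[p.2] (z p.1) with hw
  set b : Fin n × ℕ → K := fun p => hbarSeq σK ℏ p.2 * (⇑σK)^[p.2] (a p.1) with hb
  have hw0 : ∀ p, w p ≠ 0 := by
    rintro ⟨i, j⟩
    induction j with
    | zero => exact hz0 i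
    | succ j ih =>
        have h1 : w (i, j + 1) = σL (w (i, j)) := by
          simp only [hw, Function.iterate_succ_apply']
        rw [h1]
        exact (map_ne_zero σL).mpr ih
  have hwd : ∀ p, δL (w p) = algebraMap K L (b p) * w p := by
    rintro ⟨i, j⟩
    induction j with
    | zero => simpa [hw, hb, hbarSeq] using hz i
    | succ j ih =>
        have h1 : w (i, j + 1) = σL (w (i, j)) := by
          simp only [hw, Function.iterate_succ_apply']
        rw [h1, hcomm, ih, map_mul, hσcompat, ← mul_assoc, ← map_mul]
        congr 2
        simp only [hb, hbarSeq, Function.iterate_succ_apply']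
        rw [map_mul]
        ring
  -- the weighted exponent sum attached to a monomial
  set B : ((Fin n × ℕ) →₀ ℕ) → K := fun α => ∑ k ∈ α.support, (α k : K) * b k with hB
  have hWd : ∀ α : (Fin n × ℕ) →₀ ℕ,
      δL (∏ k ∈ α.support, w k ^ α k) =
        algebraMap K L (B α) * ∏ k ∈ α.support, w k ^ α k := by
    intro α
    rw [dProd δL hδLmul _ w (fun k => algebraMap K L (b k)) _ (fun k _ => hwd k)]
    congr 1
    rw [hB, map_sum]
    refine Finset.sum_congr rfl fun k _ => ?_
    simp [map_mul, map_natCast]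
  have hWz : ∀ α : (Fin n × ℕ) →₀ ℕ, (∏ k ∈ α.support, w k ^ α k) ≠ 0 :=
    fun α => Finset.prod_ne_zero_iff.mpr fun k _ => pow_ne_zero _ (hw0 k)
  set Dp : MvPolynomial (Fin n × ℕ) K → MvPolynomial (Fin n × ℕ) K :=
    fun p => ∑ α ∈ p.support, monomial α (δK (p.coeff α) + p.coeff α * B α) with hDp
  have haevalD : ∀ p : MvPolynomial (Fin n × ℕ) K,
      δL (MvPolynomial.aeval w p) = MvPolynomial.aeval w (Dp p) := by
    intro p
    rw [aeval_def, eval₂_eq, dSum δL hδLadd, hDp, map_sum]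
    refine Finset.sum_congr rfl fun α hα => ?_
    rw [hδLmul, hWd, hδcompat, aeval_monomial, map_add, Finsupp.prod, map_mul]
    ring
  constructor
  · -- forward direction
    intro hdep
    rw [algebraicIndependent_iff] at hdep
    push_neg at hdep
    obtain ⟨p₀, hp₀z, hp₀0⟩ := hdep
    have hex : ∃ m, ∃ p : MvPolynomial (Fin n × ℕ) K,
        p ≠ 0 ∧ MvPolynomial.aeval w p = 0 ∧ p.support.card = m :=
      ⟨_, p₀, hp₀0, hp₀z, rfl⟩
    obtain ⟨p, hp0, hpz, hpc⟩ := Nat.find_spec hex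
    have hmin : ∀ q : MvPolynomial (Fin n × ℕ) K, q ≠ 0 → MvPolynomial.aeval w q = 0 →
        p.support.card ≤ q.support.card := by
      intro q h1 h2
      rw [hpc]
      exact Nat.find_le ⟨q, h1, h2, rfl⟩
    obtain ⟨α₀, hα₀⟩ := MvPolynomial.support_nonempty.mpr hp0
    have hc₀ : p.coeff α₀ ≠ 0 := MvPolynomial.mem_support_iff.mp hα₀
    set q : MvPolynomial (Fin n × ℕ) K := Dp p with hq
    have hqz : MvPolynomial.aeval w q = 0 := by rw [hq, ← haevalD, hpz, hδL0]
    have hqsupp : q.support ⊆ p.support := by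
      rw [hq, hDp]
      refine MvPolynomial.support_sum.trans ?_
      intro β hβ
      simp only [Finset.mem_biUnion] at hβ
      obtain ⟨α, hα, hβ'⟩ := hβ
      have hsub := MvPolynomial.support_monomial_subset hβ'
      rw [Finset.mem_singleton] at hsub
      rwa [hsub]
    have hqcoeff : ∀ α, q.coeff α =
        if α ∈ p.support then δK (p.coeff α) + p.coeff α * B α else 0 := by
      intro α
      rw [hq, hDp]
      simp only [MvPolynomial.coeff_sum, MvPolynomial.coeff_monomial]
      exact Finset.sum_ite_eq' p.support α _
    set c₀ := p.coeff α₀ with hc₀def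
    set q' : MvPolynomial (Fin n × ℕ) K := C c₀ * q - C (q.coeff α₀) * p with hq'
    have hq'z : MvPolynomial.aeval w q' = 0 := by
      rw [hq', map_sub, map_mul, map_mul, hqz, hpz, mul_zero, mul_zero, sub_zero]
    have hq'coeff : ∀ α, q'.coeff α = c₀ * q.coeff α - q.coeff α₀ * p.coeff α := by
      intro α
      rw [hq', MvPolynomial.coeff_sub, MvPolynomial.coeff_C_mul, MvPolynomial.coeff_C_mul]
    have hq's : q'.support ⊆ p.support.erase α₀ := by
      intro β hβ
      have hβ0 : q'.coeff β ≠ 0 := MvPolynomial.mem_support_iff.mp hβ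
      rw [hq'coeff] at hβ0
      rcases eq_or_ne β α₀ with rfl | hneβ
      · exact absurd (by ring) hβ0
      refine Finset.mem_erase.mpr ⟨hneβ, ?_⟩
      by_contra hβp
      have h1 : p.coeff β = 0 := MvPolynomial.notMem_support_iff.mp hβp
      have h2 : q.coeff β = 0 := by rw [hqcoeff, if_neg hβp]
      rw [h1, h2] at hβ0
      simp at hβ0
    have hq'0 : q' = 0 := by
      by_contra h
      have h1 := hmin q' h hq'z
      have h2 : q'.support.card < p.support.card :=
        lt_of_le_of_lt (Finset.card_le_card hq's) (Finset.card_erase_lt_of_mem hα₀)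
      omega
    have key : ∀ α, c₀ * q.coeff α = q.coeff α₀ * p.coeff α := by
      intro α
      have h1 := congrArg (fun t => MvPolynomial.coeff α t) hq'0
      simp only [MvPolynomial.coeff_zero] at h1
      rw [hq'coeff] at h1
      linear_combination h1
    have h2card : ∃ α₁ ∈ p.support, α₁ ≠ α₀ := by
      by_contra hcon
      push_neg at hcon
      have hsupp : p.support = {α₀} := by
        apply Finset.Subset.antisymm
        · intro β hβ
          rw [Finset.mem_singleton]
          exact hcon β hβ
        · simpa using hα₀
      have h1 := hpz
      rw [aeval_def, eval₂_eq, hsupp, Finset.sum_singleton] at h1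
      exact (mul_ne_zero ((map_ne_zero (algebraMap K L)).mpr hc₀) (hWz α₀)) h1
    obtain ⟨α₁, hα₁, hne10⟩ := h2card
    set c₁ := p.coeff α₁ with hc₁def
    have hc₁ : c₁ ≠ 0 := MvPolynomial.mem_support_iff.mp hα₁
    have eq1 : c₀ * (δK c₁ + c₁ * B α₁) = (δK c₀ + c₀ * B α₀) * c₁ := by
      have h1 := key α₁
      rw [hqcoeff α₁, if_pos hα₁, hqcoeff α₀, if_pos hα₀, ← hc₁def, ← hc₀def] at h1
      linear_combination h1
    set g := c₁ / c₀ with hgdef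
    have hg0 : g ≠ 0 := div_ne_zero hc₁ hc₀
    have hc₁g : c₁ = g * c₀ := by
      rw [hgdef]
      field_simp
    have eq2 : δK c₁ = g * δK c₀ + δK g * c₀ := by rw [hc₁g, hδKmul]
    have hδKg : δK g = (B α₀ - B α₁) * g := by
      have h4 : (δK g - (B α₀ - B α₁) * g) * (c₀ * c₀) = 0 := by
        linear_combination eq1 - c₀ * eq2 + (δK c₀ + c₀ * B α₀ - c₀ * B α₁) * hc₁g
      rcases mul_eq_zero.mp h4 with h5 | h5
      · linear_combination h5
      · exact absurd h5 (mul_ne_zero hc₀ hc₀)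
    have hlog : δK g / g = B α₀ - B α₁ := by
      rw [hδKg, mul_div_assoc, div_self hg0, mul_one]
    set T := α₀.support ∪ α₁.support with hT
    set s := T.sup Prod.snd with hs
    have hG : ∀ α : (Fin n × ℕ) →₀ ℕ, α.support ⊆ T →
        ∑ k ∈ (Finset.univ : Finset (Fin n)) ×ˢ Finset.range (s + 1), (α k : K) * b k
          = B α := by
      intro α hsub
      rw [hB]
      refine (Finset.sum_subset ?_ ?_).symm
      · intro k hk
        have hkT : k.2 ≤ s := Finset.le_sup (hsub hk)
        exact Finset.mem_product.mpr ⟨Finset.mem_univ _, Finset.mem_range.mpr (by omega)⟩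
      · intro k _ hk
        rw [Finsupp.notMem_support_iff.mp hk]
        simp
    refine ⟨s, fun i j => (α₀ (i, j) : ℤ) - (α₁ (i, j) : ℤ), g, ?_, hg0, ?_⟩
    · obtain ⟨k, hk⟩ := Finsupp.ne_iff.mp hne10
      have hkT : k ∈ T := by
        rw [hT, Finset.mem_union]
        by_contra hcon
        push_neg at hcon
        obtain ⟨h1, h2⟩ := hcon
        rw [Finsupp.notMem_support_iff.mp h1, Finsupp.notMem_support_iff.mp h2] at hk
        exact hk rfl
      refine ⟨k.1, k.2, Finset.le_sup hkT, ?_⟩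
      rw [sub_ne_zero]
      intro hcast
      exact hk (Nat.cast_injective hcast).symm
    · rw [hlog]
      have hswap :
          (∑ i : Fin n, ∑ j ∈ Finset.range (s + 1),
            (((α₀ (i, j) : ℤ) - (α₁ (i, j) : ℤ) : ℤ) : K) * hbarSeq σK ℏ j
              * (⇑σK)^[j] (a i))
          = ∑ k ∈ (Finset.univ : Finset (Fin n)) ×ˢ Finset.range (s + 1),
              ((α₀ k : K) - (α₁ k : K)) * b k := by
        rw [Finset.sum_product]
        refine Finset.sum_congr rfl fun i _ => Finset.sum_congr rfl fun j _ => ?_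
        push_cast
        rw [hb]
        ring
      rw [hswap]
      rw [show (∑ k ∈ (Finset.univ : Finset (Fin n)) ×ˢ Finset.range (s + 1),
            ((α₀ k : K) - (α₁ k : K)) * b k)
          = (∑ k ∈ (Finset.univ : Finset (Fin n)) ×ˢ Finset.range (s + 1),
              (α₀ k : K) * b k)
            - ∑ k ∈ (Finset.univ : Finset (Fin n)) ×ˢ Finset.range (s + 1),
              (α₁ k : K) * b k by
        rw [← Finset.sum_sub_distrib]
        exact Finset.sum_congr rfl fun k _ => by ring]
      rw [hG α₀ Finset.subset_union_left, hG α₁ Finset.subset_union_right]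
  · -- backward direction
    rintro ⟨s, r, g, ⟨i₀, j₀, hj₀, hr0⟩, hg0, hsum⟩
    intro hind
    rw [algebraicIndependent_iff] at hind
    set G : Finset (Fin n × ℕ) :=
      (Finset.univ : Finset (Fin n)) ×ˢ Finset.range (s + 1) with hGdef
    have hmemG : ∀ k : Fin n × ℕ, k.2 ≤ s → k ∈ G := fun k hk =>
      Finset.mem_product.mpr ⟨Finset.mem_univ _, Finset.mem_range.mpr (by omega)⟩
    set αp : (Fin n × ℕ) →₀ ℕ := Finsupp.onFinset G
      (fun k => if k.2 ≤ s then (r k.1 k.2).toNat else 0)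
      (by
        intro k hk
        by_cases h : k.2 ≤ s
        · exact hmemG k h
        · simp [h] at hk) with hαp
    set αm : (Fin n × ℕ) →₀ ℕ := Finsupp.onFinset G
      (fun k => if k.2 ≤ s then (-(r k.1 k.2)).toNat else 0)
      (by
        intro k hk
        by_cases h : k.2 ≤ s
        · exact hmemG k h
        · simp [h] at hk) with hαm
    have hαpapp : ∀ k : Fin n × ℕ, αp k = if k.2 ≤ s then (r k.1 k.2).toNat else 0 :=
      fun k => Finsupp.onFinset_apply
    have hαmapp : ∀ k : Fin n × ℕ, αm k = if k.2 ≤ s then (-(r k.1 k.2)).toNat else 0 :=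
      fun k => Finsupp.onFinset_apply
    have hαpsupp : αp.support ⊆ G := Finsupp.support_onFinset_subset
    have hαmsupp : αm.support ⊆ G := Finsupp.support_onFinset_subset
    have hBsum : ∀ α : (Fin n × ℕ) →₀ ℕ, α.support ⊆ G →
        B α = ∑ k ∈ G, (α k : K) * b k := by
      intro α hsub
      rw [hB]
      refine Finset.sum_subset hsub fun k _ hk => ?_
      rw [Finsupp.notMem_support_iff.mp hk]
      simp
    have hBpm : B αp - B αm = δK g / g := by
      rw [hBsum αp hαpsupp, hBsum αm hαmsupp, ← Finset.sum_sub_distrib, ← hsum,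
        hGdef, Finset.sum_product]
      refine Finset.sum_congr rfl fun i _ => Finset.sum_congr rfl fun j hj => ?_
      have hjs : j ≤ s := by
        rw [Finset.mem_range] at hj
        omega
      rw [hαpapp, hαmapp]
      simp only [hjs, if_true]
      have hcast : ((r i j).toNat : K) - (((-(r i j)).toNat : ℕ) : K) = (r i j : K) := by
        have h7 : (((r i j).toNat : ℤ) : K) - (((-(r i j)).toNat : ℤ) : K)
            = ((r i j : ℤ) : K) := by
          rw [← Int.cast_sub]
          congr 1
          omega
        push_cast at h7 ⊢
        linear_combination h7
      rw [hb]
      linear_combination (hbarSeq σK ℏ j * (⇑σK)^[j] (a i)) * hcast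
    have hδg : δK g = (B αp - B αm) * g := by
      rw [hBpm, div_mul_cancel₀ _ hg0]
    set Xp : L := ∏ k ∈ αp.support, w k ^ αp k with hXp
    set Xm : L := ∏ k ∈ αm.support, w k ^ αm k with hXm
    set y : L := algebraMap K L g * Xm with hy
    have hy0 : y ≠ 0 := mul_ne_zero ((map_ne_zero (algebraMap K L)).mpr hg0) (hWz αm)
    have hyd : δL y = algebraMap K L (B αp) * y := by
      rw [hy, hδLmul, hWd, hδcompat, hδg]
      simp only [map_mul, map_sub]
      ring
    set v : L := Xp * y⁻¹ with hv
    have hvd : δL v = 0 := by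
      rw [hv, hδLmul, dInv δL hδLmul hy0, hyd, hXp, hWd]
      have h9 : y * y⁻¹ = 1 := mul_inv_cancel₀ hy0
      linear_combination
        (-((∏ k ∈ αp.support, w k ^ αp k) * algebraMap K L (B αp) * y⁻¹)) * h9
    obtain ⟨c, hcδ, hcv⟩ := hconst v hvd
    have hxy : Xp = algebraMap K L c * y := by
      have h6 : Xp = v * y := by
        rw [hv, mul_assoc, inv_mul_cancel₀ hy0, mul_one]
      rw [h6, hcv]
    set P : MvPolynomial (Fin n × ℕ) K :=
      monomial αp (1 : K) - monomial αm (c * g) with hP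
    have haevalP : MvPolynomial.aeval w P = 0 := by
      rw [hP, map_sub, aeval_monomial, aeval_monomial, map_one, one_mul,
        Finsupp.prod, Finsupp.prod]
      rw [← hXp, ← hXm, hxy, hy, map_mul]
      ring
    have hαne : αp ≠ αm := by
      intro h
      have h8 := congrArg (fun f : (Fin n × ℕ) →₀ ℕ => f (i₀, j₀)) h
      rw [hαpapp, hαmapp] at h8
      simp only [hj₀, if_true] at h8
      omega
    have hPcoeff : P.coeff αp = 1 := by
      rw [hP, MvPolynomial.coeff_sub, MvPolynomial.coeff_monomial,
        MvPolynomial.coeff_monomial, if_pos rfl, if_neg (fun h => hαne h.symm)]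
      ring
    have hPne : P ≠ 0 := by
      intro h0
      rw [h0, MvPolynomial.coeff_zero] at hPcoeff
      exact one_ne_zero hPcoeff.symm
    exact hPne (hind P haevalP)
end

section
/- Let L|K be an extension of fields of characteristic zero equipped with a derivation δ on L that maps K into K. Let a, b, c ∈ K and v ∈ L with δ(v) = a·v. If the equation δ(y) − c·y = b has a solution in the intermediate field K(v) generated by v over K, then it already has a solution in K. -/
open Polynomial

namespace S5

variable {K L : Type*} [Field K] [Field L] [Algebra K L]

noncomputable def dmap (δ : K → K) (h0 : δ 0 = 0) (r : K[X]) : K[X] :=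
  ⟨⟨Finsupp.mapRange δ h0 r.toFinsupp.coeff⟩⟩

lemma dmap_coeff (δ : K → K) (h0 : δ 0 = 0) (r : K[X]) (i : ℕ) :
    (dmap δ h0 r).coeff i = δ (r.coeff i) := rfl

lemma dmap_add (δ : K → K) (h0 : δ 0 = 0)
    (hadd : ∀ x y, δ (x + y) = δ x + δ y) (r s : K[X]) :
    dmap δ h0 (r + s) = dmap δ h0 r + dmap δ h0 s := by
  ext i; simp [dmap_coeff, coeff_add, hadd]

lemma dmap_monomial (δ : K → K) (h0 : δ 0 = 0) (n : ℕ) (k : K) :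
    dmap δ h0 (monomial n k) = monomial n (δ k) := by
  ext i
  rw [dmap_coeff, coeff_monomial, coeff_monomial]
  split <;> simp [h0]

lemma dmap_natDegree_le (δ : K → K) (h0 : δ 0 = 0) (r : K[X]) :
    (dmap δ h0 r).natDegree ≤ r.natDegree := by
  apply Polynomial.natDegree_le_iff_coeff_eq_zero.2
  intro N hN
  rw [dmap_coeff, Polynomial.coeff_eq_zero_of_natDegree_lt hN, h0]

lemma coeff_X_mul_derivative (r : K[X]) (i : ℕ) :
    (X * derivative r).coeff i = r.coeff i * i := by
  cases i with
  | zero => simp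
  | succ m => simp [Polynomial.coeff_X_mul, Polynomial.coeff_derivative]

lemma exists_C_mul {f g : K[X]} (hf : f ≠ 0) (hdvd : f ∣ g)
    (hdeg : g.natDegree ≤ f.natDegree) : ∃ e : K, g = C e * f := by
  obtain ⟨t, rfl⟩ := hdvd
  by_cases ht : t = 0
  · exact ⟨0, by simp [ht]⟩
  · have hdeg' : (f * t).natDegree = f.natDegree + t.natDegree :=
      Polynomial.natDegree_mul hf ht
    have : t.natDegree = 0 := by omega
    obtain ⟨e, rfl⟩ := Polynomial.natDegree_eq_zero.mp this
    exact ⟨e, by ring⟩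

section DL
variable (δK : K → K) (δL : L → L)
    (hadd : ∀ u v : L, δL (u + v) = δL u + δL v)
    (hmul : ∀ u v : L, δL (u * v) = u * δL v + δL u * v)
    (hcomp : ∀ x : K, δL (algebraMap K L x) = algebraMap K L (δK x))

include hadd in
lemma dL_zero : δL 0 = 0 := by simpa using hadd 0 0

include hmul in
lemma dL_one : δL 1 = 0 := by
  have := hmul 1 1
  rw [one_mul, one_mul, mul_one] at this
  exact left_eq_add.mp this

include hmul in
lemma dL_pow (u : L) (n : ℕ) : δL (u ^ n) = (n : L) * u ^ (n - 1) * δL u := by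
  induction n with
  | zero => simp [dL_one δL hmul]
  | succ m ih =>
      rw [pow_succ, hmul, ih]
      cases m with
      | zero => simp
      | succ k => simp only [Nat.add_sub_cancel]; push_cast; ring

include hadd hcomp in
lemma dK_zero : δK 0 = 0 :=
  (algebraMap K L).injective (by rw [← hcomp, map_zero, dL_zero δL hadd])

include hadd hcomp in
lemma dK_add (x y : K) : δK (x + y) = δK x + δK y :=
  (algebraMap K L).injective (by
    rw [map_add, ← hcomp, ← hcomp, ← hcomp, map_add, hadd])

include hmul hcomp in
lemma dK_mul (x y : K) : δK (x * y) = x * δK y + δK x * y :=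
  (algebraMap K L).injective (by
    rw [map_add, map_mul, map_mul, ← hcomp, ← hcomp, ← hcomp, map_mul, hmul])

include hmul hcomp in
lemma dK_one : δK 1 = 0 :=
  (algebraMap K L).injective (by rw [← hcomp, map_one, map_zero, dL_one δL hmul])

include hadd hmul hcomp in
lemma dK_natCast (n : ℕ) : δK (n : K) = 0 := by
  induction n with
  | zero => simpa using dK_zero δK δL hadd hcomp
  | succ m ih =>
      push_cast
      rw [dK_add δK δL hadd hcomp, ih, dK_one δK δL hmul hcomp, add_zero]

include hadd hmul hcomp in
lemma dK_neg (x : K) : δK (-x) = -δK x := by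
  have h := dK_add δK δL hadd hcomp x (-x)
  rw [add_neg_cancel, dK_zero δK δL hadd hcomp] at h
  linear_combination -h

include hmul hcomp in
lemma dK_inv (x : K) (hx : x ≠ 0) : δK x⁻¹ = -(δK x) * (x⁻¹) ^ 2 := by
  have h := dK_mul δK δL hmul hcomp x x⁻¹
  rw [mul_inv_cancel₀ hx, dK_one δK δL hmul hcomp] at h
  have hx' : x * x⁻¹ = 1 := mul_inv_cancel₀ hx
  rw [pow_two]
  linear_combination (-(x⁻¹)) * h - δK x⁻¹ * hx'

include hadd hmul hcomp in
lemma deriv_aeval (h0 : δK 0 = 0) (u : L) (r : K[X]) :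
    δL (aeval u r) = aeval u (dmap δK h0 r) + aeval u (derivative r) * δL u := by
  induction r using Polynomial.induction_on' with
  | add p q hp hq =>
      simp only [dmap_add δK h0 (dK_add δK δL hadd hcomp), derivative_add, map_add, hadd, hp, hq]
      ring
  | monomial n k =>
      rw [dmap_monomial, aeval_monomial, aeval_monomial, hmul, hcomp,
        dL_pow δL hmul, derivative_monomial, aeval_monomial]
      push_cast
      ring

include hadd hmul hcomp in
lemma case_algebraic [CharZero K] (b c : K) (y : L) (hy : IsAlgebraic K y)
    (heq : δL y = algebraMap K L c * y + algebraMap K L b) :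
    ∃ z : K, δK z - c * z = b := by
  have h0 : δK 0 = 0 := dK_zero δK δL hadd hcomp
  have hint : IsIntegral K y := hy.isIntegral
  set f := minpoly K y with hfdef
  have hmono : f.Monic := minpoly.monic hint
  have hfne : f ≠ 0 := hmono.ne_zero
  have npos : 0 < f.natDegree := minpoly.natDegree_pos hint
  obtain ⟨m, hn⟩ : ∃ m, f.natDegree = m + 1 := ⟨f.natDegree - 1, by omega⟩
  have hz : (0 : L) = aeval y (dmap δK h0 f) + aeval y (derivative f) *
      (algebraMap K L c * y + algebraMap K L b) := by
    rw [← heq, ← deriv_aeval δK δL hadd hmul hcomp h0 y f, minpoly.aeval,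
      dL_zero δL hadd]
  set g : K[X] := dmap δK h0 f + C c * (X * derivative f) + C b * derivative f with hg
  have hgy : aeval y g = 0 := by
    rw [hg]
    simp only [map_add, map_mul, aeval_C, aeval_X]
    linear_combination -hz
  have hdvd : f ∣ g := minpoly.dvd K y hgy
  have hdeg : g.natDegree ≤ f.natDegree := by
    have d1 : (dmap δK h0 f).natDegree ≤ f.natDegree := dmap_natDegree_le δK h0 f
    have d2 : (C c * (X * derivative f)).natDegree ≤ f.natDegree := by
      refine le_trans (natDegree_C_mul_le _ _) (le_trans (natDegree_mul_le) ?_)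
      have := Polynomial.natDegree_derivative_le f
      have hx := Polynomial.natDegree_X (R := K)
      omega
    have d3 : (C b * derivative f).natDegree ≤ f.natDegree := by
      refine le_trans (natDegree_C_mul_le _ _) ?_
      have := Polynomial.natDegree_derivative_le f
      omega
    refine le_trans (natDegree_add_le _ _) ?_
    refine max_le (le_trans (natDegree_add_le _ _) (max_le d1 d2)) d3
  obtain ⟨e, hge⟩ := exists_C_mul hfne hdvd hdeg
  have hfn1 : f.coeff f.natDegree = 1 := hmono.coeff_natDegree
  have hfsucc : f.coeff (f.natDegree + 1) = 0 :=
    Polynomial.coeff_eq_zero_of_natDegree_lt (by omega)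
  have he : e = c * ((f.natDegree : K)) := by
    have h1 : g.coeff f.natDegree = e * f.coeff f.natDegree := by
      rw [hge, coeff_C_mul]
    rw [hfn1, mul_one] at h1
    rw [hg, coeff_add, coeff_add, dmap_coeff, coeff_C_mul, coeff_C_mul,
      coeff_X_mul_derivative, coeff_derivative, hfn1, hfsucc,
      dK_one δK δL hmul hcomp] at h1
    rw [← h1]
    ring
  have hcm : δK (f.coeff m) + c * (f.coeff m * (m : K)) +
      b * (f.coeff (m + 1) * ((m : K) + 1)) = e * f.coeff m := by
    have h1 : g.coeff m = e * f.coeff m := by rw [hge, coeff_C_mul]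
    rw [hg, coeff_add, coeff_add, dmap_coeff, coeff_C_mul, coeff_C_mul,
      coeff_X_mul_derivative, coeff_derivative] at h1
    exact h1
  rw [← hn, hfn1, one_mul] at hcm
  -- now: δK fm + c * fm * m + b * (m+1) = c * (m+1) * fm
  set fm := f.coeff m with hfm
  have hm1 : ((m : K) + 1) ≠ 0 := Nat.cast_add_one_ne_zero m
  have hδnat : δK ((m : K) + 1) = 0 := by
    have := dK_natCast δK δL hadd hmul hcomp (m + 1)
    push_cast at this
    exact this
  have hδinv : δK (((m : K) + 1)⁻¹) = 0 := by
    rw [dK_inv δK δL hmul hcomp _ hm1, hδnat]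
    ring
  refine ⟨(-fm) * ((m : K) + 1)⁻¹, ?_⟩
  have hδz : δK ((-fm) * ((m : K) + 1)⁻¹) = -δK fm * ((m : K) + 1)⁻¹ := by
    rw [dK_mul δK δL hmul hcomp, hδinv, dK_neg δK δL hadd hmul hcomp]
    ring
  rw [hδz]
  have hinv : ((m : K) + 1) * ((m : K) + 1)⁻¹ = 1 := mul_inv_cancel₀ hm1
  have hcast : (f.natDegree : K) = (m : K) + 1 := by rw [hn]; push_cast; ring
  rw [he, hcast] at hcm
  linear_combination (-(((m : K) + 1)⁻¹)) * hcm + b * hinv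

include hadd hmul hcomp in
lemma case_transcendental (a b c : K) (v : L)
    (hv : δL v = algebraMap K L a * v)
    (htr : Transcendental K v)
    (y : L) (hyF : y ∈ IntermediateField.adjoin K {v})
    (heq : δL y = algebraMap K L c * y + algebraMap K L b) :
    ∃ z : K, δK z - c * z = b := by
  classical
  have h0 : δK 0 = 0 := dK_zero δK δL hadd hcomp
  have hinj0 : ∀ r : K[X], aeval v r = 0 → r = 0 := by
    intro r hr
    by_contra h
    exact htr ⟨r, h, hr⟩
  have hinj : ∀ r s : K[X], aeval v r = aeval v s → r = s := by
    intro r s h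
    have : aeval v (r - s) = 0 := by rw [map_sub, h, sub_self]
    have := hinj0 _ this
    linear_combination this
  by_cases hy0 : y = 0
  · refine ⟨0, ?_⟩
    have hb : algebraMap K L b = 0 := by
      have h' := heq
      rw [hy0, dL_zero δL hadd, mul_zero, zero_add] at h'
      exact h'.symm
    have : b = 0 := by
      apply (algebraMap K L).injective
      rw [hb, map_zero]
    rw [this, h0, mul_zero, sub_zero]
  obtain ⟨r, s, hrs⟩ := (IntermediateField.mem_adjoin_simple_iff K y).1 hyF
  have hs0 : aeval v s ≠ 0 := by
    intro h
    exact hy0 (by rw [hrs, h, div_zero])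
  have hsne : s ≠ 0 := fun h => hs0 (by rw [h, map_zero])
  set G := GCDMonoid.gcd r s with hG
  have hgne : G ≠ 0 := gcd_ne_zero_of_right hsne
  set p := r / G with hp
  set q := s / G with hq
  have hco : IsCoprime p q := isCoprime_div_gcd_div_gcd hsne
  have hqne : q ≠ 0 := right_div_gcd_ne_zero hsne
  have hrG : G * p = r := EuclideanDomain.mul_div_cancel' hgne (gcd_dvd_left r s)
  have hsG : G * q = s := EuclideanDomain.mul_div_cancel' hgne (gcd_dvd_right r s)
  have haeg : aeval v G ≠ 0 := fun h => hgne (hinj0 _ h)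
  have hQ : aeval v q ≠ 0 := fun h => hqne (hinj0 _ h)
  have hy2 : y = aeval v p / aeval v q := by
    rw [hrs, ← hrG, ← hsG, map_mul, map_mul, mul_div_mul_left _ _ haeg]
  have hyQ : y * aeval v q = aeval v p := by
    rw [hy2, div_mul_cancel₀ _ hQ]
  set D : K[X] → K[X] := fun r => dmap δK h0 r + C a * (X * derivative r) with hD
  have haeD : ∀ r : K[X], δL (aeval v r) = aeval v (D r) := by
    intro r
    rw [deriv_aeval δK δL hadd hmul hcomp h0 v r, hD]
    simp only [map_add, map_mul, aeval_C, aeval_X]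
    rw [hv]
    ring
  have hDcoeff : ∀ (r : K[X]) (i : ℕ),
      (D r).coeff i = δK (r.coeff i) + a * (r.coeff i * i) := by
    intro r i
    rw [hD]
    simp only [coeff_add, dmap_coeff, coeff_C_mul, coeff_X_mul_derivative]
  -- the main identity in L
  have h1 : δL (aeval v p) = y * δL (aeval v q) + δL y * aeval v q := by
    rw [← hyQ, hmul]
  have h2 : δL (aeval v p) * aeval v q =
      aeval v p * δL (aeval v q) +
        (algebraMap K L c * aeval v p + algebraMap K L b * aeval v q) * aeval v q := by
    rw [h1, heq]
    linear_combination (δL (aeval v q) + algebraMap K L c * aeval v q) * hyQ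
  have hpoly : D p * q = p * D q + (C c * p + C b * q) * q := by
    apply hinj
    simp only [map_mul, map_add, aeval_C]
    rw [← haeD, ← haeD]
    linear_combination h2
  have hdvd : q ∣ D q := by
    refine hco.symm.dvd_of_dvd_mul_left (⟨D p - C c * p - C b * q, ?_⟩ : q ∣ p * D q)
    linear_combination -hpoly
  have hdegD : (D q).natDegree ≤ q.natDegree := by
    apply Polynomial.natDegree_le_iff_coeff_eq_zero.2
    intro N hN
    rw [hDcoeff, Polynomial.coeff_eq_zero_of_natDegree_lt hN, h0]
    ring
  obtain ⟨e, hDq⟩ := exists_C_mul hqne hdvd hdegD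
  set n := q.natDegree with hn
  set l := q.coeff n with hldef
  have hl : l ≠ 0 := by
    rw [hldef, hn]
    exact Polynomial.leadingCoeff_ne_zero.2 hqne
  have h3 : δK l + a * (l * (n : K)) = e * l := by
    have := congrArg (fun (t : K[X]) => t.coeff n) hDq
    simpa only [hDcoeff, coeff_C_mul] using this
  have hcancel : D p = C e * p + C c * p + C b * q := by
    apply mul_right_cancel₀ hqne
    linear_combination hpoly + p * hDq
  set pn := p.coeff n with hpn
  have h4 : δK pn + a * (pn * (n : K)) = e * pn + c * pn + b * l := by
    have := congrArg (fun (t : K[X]) => t.coeff n) hcancel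
    simpa only [hDcoeff, coeff_add, coeff_C_mul] using this
  have hinvl : l * l⁻¹ = 1 := mul_inv_cancel₀ hl
  refine ⟨pn * l⁻¹, ?_⟩
  have hδz : δK (pn * l⁻¹) = δK pn * l⁻¹ + pn * (-(δK l) * (l⁻¹) ^ 2) := by
    rw [dK_mul δK δL hmul hcomp, dK_inv δK δL hmul hcomp _ hl]
    ring
  rw [hδz]
  linear_combination (l⁻¹) * h4 - (pn * (l⁻¹) ^ 2) * h3 +
    (b + (a * pn * (n : K) - e * pn) * l⁻¹) * hinvl

end DL

end S5

/-- rational descent of solutions of `δ(y) − c·y = b`.  Let `L|K` be an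
extension of fields of characteristic zero with a derivation `δL` on `L` mapping `K`
into `K` (via `δK`), and let `v ∈ L` satisfy `δ(v) = a·v` with `a ∈ K`.  If
`δ(y) − c·y = b` (with `b, c ∈ K`) has a solution in the intermediate field `K(v)`,
then it has a solution in `K`. -/
theorem stmt_5 {K L : Type*} [Field K] [Field L] [Algebra K L] [CharZero K]
    (δK : K → K) (δL : L → L)
    (hδLadd : ∀ u v : L, δL (u + v) = δL u + δL v)
    (hδLmul : ∀ u v : L, δL (u * v) = u * δL v + δL u * v)
    (hδcompat : ∀ x : K, δL (algebraMap K L x) = algebraMap K L (δK x))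
    (a b c : K) (v : L)
    (hv : δL v = algebraMap K L a * v)
    (hsol : ∃ y ∈ IntermediateField.adjoin K {v},
      δL y - algebraMap K L c * y = algebraMap K L b) :
    ∃ y : K, δK y - c * y = b := by
  obtain ⟨y, hyF, hsolv⟩ := hsol
  have heq : δL y = algebraMap K L c * y + algebraMap K L b := by
    linear_combination hsolv
  by_cases halg : IsAlgebraic K v
  · have hyalg : IsAlgebraic K y := by
      haveI := IntermediateField.adjoin.finiteDimensional halg.isIntegral
      have h1 : IsIntegral K (⟨y, hyF⟩ : IntermediateField.adjoin K {v}) :=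
        IsIntegral.of_finite K _
      have h2 : IsIntegral K y := by
        have := h1.map (IsScalarTower.toAlgHom K (IntermediateField.adjoin K {v}) L)
        simpa using this
      exact h2.isAlgebraic
    exact S5.case_algebraic δK δL hδLadd hδLmul hδcompat b c y hyalg heq
  · exact S5.case_transcendental δK δL hδLadd hδLmul hδcompat a b c v hv halg y hyF heq
end

section
/- Let K be a δσ-field of characteristic zero, n ≥ 1, A ∈ K^{n×n} and d ≥ 1, and suppose B ∈ GLₙ(K) satisfies the integrability condition δ(B) + B·A = ℏ_d·σ^d(A)·B (with δ and σ applied entrywise). Let L be a δσ-field extension of K with L^δ = K^δ =: k which contains a fundamental solution matrix Y ∈ GLₙ(L) with δ(Y) = A·Y (for instance, a σ-Picard–Vessiot extension of K for δ(y) = Ay). If k is linearly σ^d-closed, i.e. for every m ≥ 1 and every C ∈ GLₘ(k) there exists D ∈ GLₘ(k) with σ^d(D) = C·D, then there exists Z ∈ GLₙ(L) with δ(Z) = A·Z and σ^d(Z) = B·Z. -/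
/-- if `δ(y) = A·y` admits `B ∈ GLₙ(K)` with the integrability condition
`δ(B) + B·A = ℏ_d·σ^d(A)·B`, and `L|K` is a δσ-field extension with `L^δ = K^δ =: k`
containing a fundamental solution matrix `Y` of `δ(y) = A·y`, and `k` is linearly
σ^d-closed (phrased via matrices over `K` with δ-constant entries), then the combined
system `δ(Z) = A·Z`, `σ^d(Z) = B·Z` has an invertible solution `Z` over `L`. -/
theorem stmt_10 {K L : Type*} [Field K] [Field L] [Algebra K L] [CharZero K]
    (δK : K → K) (σK : K →+* K) (δL : L → L) (σL : L →+* L) (ℏ : K)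
    (hδLadd : ∀ u v : L, δL (u + v) = δL u + δL v)
    (hδLmul : ∀ u v : L, δL (u * v) = u * δL v + δL u * v)
    (hδcompat : ∀ x : K, δL (algebraMap K L x) = algebraMap K L (δK x))
    (hσcompat : ∀ x : K, σL (algebraMap K L x) = algebraMap K L (σK x))
    (hℏ0 : ℏ ≠ 0) (hδℏ : δK ℏ = 0)
    (hcomm : ∀ r : L, δL (σL r) = algebraMap K L ℏ * σL (δL r))
    (hconst : ∀ x : L, δL x = 0 → ∃ c : K, δK c = 0 ∧ x = algebraMap K L c)
    (n : ℕ) (hn : 1 ≤ n) (d : ℕ) (hd : 1 ≤ d)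
    (A : Matrix (Fin n) (Fin n) K)
    (B : Matrix (Fin n) (Fin n) K) (hB : IsUnit B)
    (hint : B.map δK + B * A = hbarSeq σK ℏ d • (A.map ((⇑σK)^[d])) * B)
    (Y : Matrix (Fin n) (Fin n) L) (hY : IsUnit Y)
    (hYsol : Y.map δL = (A.map (algebraMap K L)) * Y)
    (hclosed : ∀ (m : ℕ), 1 ≤ m → ∀ C : Matrix (Fin m) (Fin m) K,
      (∀ i j, δK (C i j) = 0) → IsUnit C →
      ∃ D : Matrix (Fin m) (Fin m) K, (∀ i j, δK (D i j) = 0) ∧ IsUnit D ∧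
        D.map ((⇑σK)^[d]) = C * D) :
    ∃ Z : Matrix (Fin n) (Fin n) L, IsUnit Z ∧
      Z.map δL = (A.map (algebraMap K L)) * Z ∧
      Z.map ((⇑σL)^[d]) = (B.map (algebraMap K L)) * Z := by
  classical
  set ι : K →+* L := algebraMap K L with hι
  have hιinj : Function.Injective ι := ι.injective
  let δhom : L →+ L := AddMonoidHom.mk' δL hδLadd
  have hδhom : ⇑δhom = δL := rfl
  set σd : L →+* L := σL ^ d with hσd
  have hσdcoe : ⇑σd = (⇑σL)^[d] := RingHom.coe_pow σL d
  have hσiter : ∀ (j : ℕ) (x : K), (⇑σL)^[j] (ι x) = ι ((⇑σK)^[j] x) := by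
    intro j
    induction j with
    | zero => intro x; simp
    | succ j ih =>
      intro x
      rw [Function.iterate_succ_apply', Function.iterate_succ_apply', ih, hσcompat]
  have hδσ : ∀ (j : ℕ) (r : L), δL ((⇑σL)^[j] r) = ι (hbarSeq σK ℏ j) * (⇑σL)^[j] (δL r) := by
    intro j
    induction j with
    | zero => intro r; simp [hbarSeq]
    | succ j ih =>
      intro r
      rw [Function.iterate_succ_apply', Function.iterate_succ_apply', hcomm, ih,
        map_mul σL, hσcompat]
      simp only [hbarSeq, map_mul]
      ring
  -- matrix Leibniz rule
  have mder : ∀ M N : Matrix (Fin n) (Fin n) L,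
      (M * N).map δL = M * N.map δL + M.map δL * N := by
    intro M N
    ext i j
    simp only [Matrix.map_apply, Matrix.mul_apply, Matrix.add_apply, ← hδhom, map_sum]
    rw [← Finset.sum_add_distrib]
    refine Finset.sum_congr rfl fun k _ => ?_
    simp [hδhom, hδLmul]
  set A_L : Matrix (Fin n) (Fin n) L := A.map ι with hA_L
  set B_L : Matrix (Fin n) (Fin n) L := B.map ι with hB_L
  set S : Matrix (Fin n) (Fin n) L := Y.map ((⇑σL)^[d]) with hSdef
  set σA : Matrix (Fin n) (Fin n) L := A_L.map ((⇑σL)^[d]) with hσA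
  set hh : L := ι (hbarSeq σK ℏ d) with hhh
  have hBLu : IsUnit B_L := by
    have := hB.map ι.mapMatrix
    rwa [RingHom.mapMatrix_apply] at this
  have hSu : IsUnit S := by
    have := hY.map σd.mapMatrix
    rwa [RingHom.mapMatrix_apply, hσdcoe] at this
  have hAσ : (A.map ((⇑σK)^[d])).map ι = σA := by
    ext i j
    simp [Matrix.map_apply, hσiter d, hσA, hA_L]
  -- δ of B_L via hint
  have hBLder : B_L.map δL = hh • σA * B_L - B_L * A_L := by
    have h1 : B_L.map δL = (B.map δK).map ι := by
      ext i j
      simp [Matrix.map_apply, hδcompat, hB_L]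
    have h3 : (hbarSeq σK ℏ d • (A.map ((⇑σK)^[d])) * B).map ι = hh • σA * B_L := by
      ext i j
      simp only [Matrix.map_apply, Matrix.mul_apply, Matrix.smul_apply, smul_eq_mul,
        map_sum, map_mul, hσA, hA_L, hB_L, hhh, hσiter d]
    have h2 : (B.map δK).map ι + B_L * A_L = hh • σA * B_L := by
      rw [← h3]
      have := congrArg (fun M => M.map ι) hint
      rw [← this]
      ext i j
      simp only [Matrix.map_apply, Matrix.add_apply, map_add, Matrix.mul_apply, map_sum,
        map_mul, hA_L, hB_L]
    rw [h1, eq_sub_iff_add_eq, h2]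
  -- δ of S
  have hSder : S.map δL = hh • (σA * S) := by
    have h1 : S.map δL = hh • ((Y.map δL).map ((⇑σL)^[d])) := by
      ext i j
      simp [hSdef, Matrix.map_apply, Matrix.smul_apply, hδσ d, hhh]
    rw [h1, hYsol, ← hσdcoe, Matrix.map_mul, hσdcoe]
  -- the constant matrix C over L
  set C_L : Matrix (Fin n) (Fin n) L := (↑hSu.unit⁻¹ : Matrix (Fin n) (Fin n) L) * (B_L * Y)
    with hCLdef
  have hSC : S * C_L = B_L * Y := by
    rw [hCLdef, ← mul_assoc, IsUnit.mul_val_inv hSu, one_mul]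
  have hCLu : IsUnit C_L := (hSu.unit⁻¹).isUnit.mul (hBLu.mul hY)
  have hCLder : C_L.map δL = 0 := by
    have key : S * C_L.map δL = 0 := by
      have e1 : S * C_L.map δL + S.map δL * C_L = B_L * Y.map δL + B_L.map δL * Y := by
        rw [← mder, ← mder, hSC]
      rw [hSder, hBLder, hYsol] at e1
      have e3 : (hh • (σA * S)) * C_L = hh • (σA * (B_L * Y)) := by
        rw [smul_mul_assoc, mul_assoc, hSC]
      have e4 : (hh • σA * B_L - B_L * A_L) * Y = hh • (σA * (B_L * Y)) - B_L * (A_L * Y) := by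
        rw [sub_mul, smul_mul_assoc, smul_mul_assoc, mul_assoc, mul_assoc]
      rw [e3, e4] at e1
      calc S * C_L.map δL
          = (S * C_L.map δL + hh • (σA * (B_L * Y))) - hh • (σA * (B_L * Y)) := by abel
        _ = (B_L * (A_L * Y) + (hh • (σA * (B_L * Y)) - B_L * (A_L * Y)))
            - hh • (σA * (B_L * Y)) := by rw [e1]
        _ = 0 := by abel
    have h := Units.inv_mul_cancel_left hSu.unit (C_L.map δL)
    rw [hSu.unit_spec, key, mul_zero] at h
    exact h.symm
  have hCLc : ∀ i j, δL (C_L i j) = 0 := by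
    intro i j
    have := congrFun (congrFun hCLder i) j
    simpa [Matrix.map_apply] using this
  have hex := fun i j => hconst (C_L i j) (hCLc i j)
  choose C hCδ hCeq using hex
  set Cm : Matrix (Fin n) (Fin n) K := Matrix.of C with hCm
  have hCL : C_L = Cm.map ι := by
    ext i j
    exact hCeq i j
  have hCmu : IsUnit Cm := by
    rw [Matrix.isUnit_iff_isUnit_det]
    rw [isUnit_iff_ne_zero]
    intro h0
    have : IsUnit (Cm.map ι).det := (Matrix.isUnit_iff_isUnit_det _).mp (hCL ▸ hCLu)
    rw [← RingHom.mapMatrix_apply, ← RingHom.map_det, h0, map_zero] at this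
    exact this.ne_zero rfl
  obtain ⟨D, hDδ, hDu, hDσ⟩ := hclosed n hn Cm (fun i j => hCδ i j) hCmu
  set D_L : Matrix (Fin n) (Fin n) L := D.map ι with hD_L
  have hDLu : IsUnit D_L := by
    have := hDu.map ι.mapMatrix
    rwa [RingHom.mapMatrix_apply] at this
  have hDL0 : D_L.map δL = 0 := by
    ext i j
    simp [hD_L, Matrix.map_apply, hδcompat, hDδ]
  refine ⟨Y * D_L, hY.mul hDLu, ?_, ?_⟩
  · rw [mder, hDL0, mul_zero, zero_add, hYsol, mul_assoc]
  · have hmulσ : (Y * D_L).map ((⇑σL)^[d]) = S * D_L.map ((⇑σL)^[d]) := by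
      rw [← hσdcoe, Matrix.map_mul, hσdcoe]
    have hDσL : D_L.map ((⇑σL)^[d]) = C_L * D_L := by
      have h1 : D_L.map ((⇑σL)^[d]) = (D.map ((⇑σK)^[d])).map ι := by
        ext i j
        simp [hD_L, Matrix.map_apply, hσiter d]
      rw [h1, hDσ, Matrix.map_mul, ← hCL]
    rw [hmulσ, hDσL, ← mul_assoc, hSC, mul_assoc]
end

section
/- Let K be a field of characteristic zero equipped with a derivation δ, let k = K^δ be its field of constants, and let A ∈ K^{n×n}. Let k̃ be a field extension of k, assume the ring K ⊗_k k̃ is an integral domain (this holds automatically since k is relatively algebraically closed in K), and let K̃ be its fraction field, equipped with a derivation δ̃ extending δ and vanishing on k̃. Then the solution space Ṽ = {z ∈ K̃ⁿ : δ̃(z) = A·z} (a k̃-vector space) equals the k̃-linear span inside K̃ⁿ of V = {z ∈ Kⁿ : δ(z) = A·z}; equivalently, the natural map V ⊗_k k̃ → Ṽ is an isomorphism of k̃-vector spaces. -/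
/-- The image of `x ∈ K` in the fraction field of `K ⊗_k k̃`. -/
noncomputable def stmt11ιK {k K kt : Type*} [Field k] [Field K] [Field kt]
    [Algebra k K] [Algebra k kt] (x : K) : FractionRing (TensorProduct k K kt) :=
  algebraMap (TensorProduct k K kt) (FractionRing (TensorProduct k K kt))
    (TensorProduct.tmul k x (1 : kt))

/-- The image of `c ∈ k̃` in the fraction field of `K ⊗_k k̃`. -/
noncomputable def stmt11ιc {k K kt : Type*} [Field k] [Field K] [Field kt]
    [Algebra k K] [Algebra k kt] (c : kt) : FractionRing (TensorProduct k K kt) :=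
  algebraMap (TensorProduct k K kt) (FractionRing (TensorProduct k K kt))
    (TensorProduct.tmul k (1 : K) c)

set_option maxHeartbeats 1000000

/-- descent of solutions of linear differential systems along a constant
field extension.  Let `K` be a δ-field of characteristic zero with constants `k = K^δ`,
`A ∈ K^{n×n}`, `k̃` a field extension of `k` with `K ⊗_k k̃` a domain, and `K̃` its
fraction field with the derivation `δ̃` extending `δ` and vanishing on `k̃`.  Then the
solution space `Ṽ = {z ∈ K̃ⁿ : δ̃(z) = A·z}` equals the `k̃`-linear span of
`V = {z ∈ Kⁿ : δ(z) = A·z}` inside `K̃ⁿ`. -/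
theorem stmt_11 {k K kt : Type*} [Field k] [Field K] [Field kt] [CharZero K]
    [Algebra k K] [Algebra k kt]
    [IsDomain (TensorProduct k K kt)]
    (δK : K → K)
    (hδadd : ∀ a b : K, δK (a + b) = δK a + δK b)
    (hδmul : ∀ a b : K, δK (a * b) = a * δK b + δK a * b)
    (hconst : ∀ a : K, δK a = 0 ↔ ∃ c : k, algebraMap k K c = a)
    (δt : FractionRing (TensorProduct k K kt) → FractionRing (TensorProduct k K kt))
    (hδtadd : ∀ a b, δt (a + b) = δt a + δt b)
    (hδtmul : ∀ a b, δt (a * b) = a * δt b + δt a * b)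
    (hδtK : ∀ x : K, δt (stmt11ιK (kt := kt) x) = stmt11ιK (kt := kt) (δK x))
    (hδtk : ∀ c : kt, δt (stmt11ιc (K := K) c) = 0)
    (n : ℕ) (A : Matrix (Fin n) (Fin n) K) :
    {z : Fin n → FractionRing (TensorProduct k K kt) |
        ∀ i, δt (z i) = ∑ j, stmt11ιK (kt := kt) (A i j) * z j} =
    {z : Fin n → FractionRing (TensorProduct k K kt) |
        ∃ (m : ℕ) (c : Fin m → kt) (v : Fin m → Fin n → K),
          (∀ t i, δK (v t i) = ∑ j, A i j * v t j) ∧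
          ∀ i, z i = ∑ t, stmt11ιc (K := K) (c t) * stmt11ιK (kt := kt) (v t i)} := by
  classical
  set φ : TensorProduct k K kt →+* FractionRing (TensorProduct k K kt) :=
    algebraMap (TensorProduct k K kt) (FractionRing (TensorProduct k K kt))
    with hφdef
  have hφinj : Function.Injective φ := IsFractionRing.injective _ _
  -- basic facts about δK
  have hδ0 : δK 0 = 0 := by
    have h := hδadd 0 0; rw [add_zero] at h; exact left_eq_add.mp h
  have hδ1 : δK 1 = 0 := by
    have h := hδmul 1 1
    simp only [one_mul, mul_one] at h
    exact left_eq_add.mp h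
  have hδalg : ∀ c : k, δK (algebraMap k K c) = 0 := fun c => (hconst _).mpr ⟨c, rfl⟩
  -- δK as a k-linear map
  let δKl : K →ₗ[k] K :=
    { toFun := δK
      map_add' := hδadd
      map_smul' := fun c a => by
        simp only [RingHom.id_apply, Algebra.smul_def]
        rw [hδmul, hδalg, zero_mul, add_zero] }
  -- basis of kt over k and induced basis of R over K
  let b := Module.Basis.ofVectorSpace k kt
  let B := Algebra.TensorProduct.basis K b
  -- the derivation on R
  let D : TensorProduct k K kt →ₗ[k] TensorProduct k K kt :=
    TensorProduct.map δKl LinearMap.id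
  have hDtmul : ∀ (a : K) (c : kt), D (a ⊗ₜ[k] c) = δK a ⊗ₜ[k] c := fun a c => by
    simp [D, δKl]
  have hφtmul : ∀ (x : K) (c : kt),
      φ (x ⊗ₜ[k] c) = stmt11ιK (k := k) (K := K) (kt := kt) x * stmt11ιc (k := k) (K := K) (kt := kt) c := by
    intro x c
    show _ = φ (x ⊗ₜ[k] (1 : kt)) * φ ((1 : K) ⊗ₜ[k] c)
    rw [← φ.map_mul, Algebra.TensorProduct.tmul_mul_tmul, mul_one, one_mul]
  have hδt0 : δt 0 = 0 := by
    have h := hδtadd 0 0; rw [add_zero] at h; exact left_eq_add.mp h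
  have hδtφ : ∀ r : TensorProduct k K kt, δt (φ r) = φ (D r) := by
    intro r
    induction r using TensorProduct.induction_on with
    | zero => rw [φ.map_zero, hδt0, D.map_zero, φ.map_zero]
    | tmul a c =>
        rw [hφtmul, hδtmul, hδtk, mul_zero, zero_add, hδtK, hDtmul, hφtmul]
    | add x y hx hy => rw [φ.map_add, hδtadd, hx, hy, D.map_add, φ.map_add]
  have hreprD : ∀ (r : TensorProduct k K kt) (α), B.repr (D r) α = δK (B.repr r α) := by
    intro r
    induction r using TensorProduct.induction_on with
    | zero => intro α; simp [hδ0]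
    | tmul a c =>
        intro α
        rw [hDtmul]
        show (Algebra.TensorProduct.basis K b).repr (δK a ⊗ₜ[k] c) α
          = δK ((Algebra.TensorProduct.basis K b).repr (a ⊗ₜ[k] c) α)
        rw [Algebra.TensorProduct.basis_repr_tmul b (δK a) c,
          Algebra.TensorProduct.basis_repr_tmul b a c]
        simp only [Finsupp.smul_apply, Finsupp.mapRange_apply, smul_eq_mul]
        rw [hδmul, hδalg, mul_zero, zero_add]
    | add x y hx hy =>
        intro α
        rw [map_add, map_add, map_add, Finsupp.add_apply, Finsupp.add_apply, hx, hy, hδadd]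
  -- ιK is multiplicative and additive
  have hιKmul : ∀ x y : K,
      stmt11ιK (k := k) (K := K) (kt := kt) (x * y) = stmt11ιK (k := k) (K := K) (kt := kt) x * stmt11ιK (k := k) (K := K) (kt := kt) y := by
    intro x y
    show φ ((x * y) ⊗ₜ[k] (1 : kt)) = φ (x ⊗ₜ[k] (1 : kt)) * φ (y ⊗ₜ[k] (1 : kt))
    rw [← φ.map_mul, Algebra.TensorProduct.tmul_mul_tmul, mul_one]
  have hιKadd : ∀ x y : K,
      stmt11ιK (k := k) (K := K) (kt := kt) (x + y) = stmt11ιK (k := k) (K := K) (kt := kt) x + stmt11ιK (k := k) (K := K) (kt := kt) y := by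
    intro x y
    show φ ((x + y) ⊗ₜ[k] (1 : kt)) = φ (x ⊗ₜ[k] (1 : kt)) + φ (y ⊗ₜ[k] (1 : kt))
    rw [← φ.map_add, TensorProduct.add_tmul]
  have hιKsum : ∀ (s : Finset (Fin n)) (f : Fin n → K),
      stmt11ιK (k := k) (K := K) (kt := kt) (∑ x ∈ s, f x) = ∑ x ∈ s, stmt11ιK (k := k) (K := K) (kt := kt) (f x) := by
    intro s f
    induction s using Finset.induction_on with
    | empty =>
        simp only [Finset.sum_empty]
        show φ ((0 : K) ⊗ₜ[k] (1 : kt)) = 0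
        rw [TensorProduct.zero_tmul, φ.map_zero]
    | insert _ _ h ih => rw [Finset.sum_insert h, hιKadd, ih, Finset.sum_insert h]
  have hδtsum : ∀ (mm : ℕ) (f : Fin mm → FractionRing (TensorProduct k K kt)),
      δt (∑ x, f x) = ∑ x, δt (f x) := by
    intro mm f
    induction (Finset.univ : Finset (Fin mm)) using Finset.induction_on with
    | empty => simp [hδt0]
    | insert _ _ h ih => rw [Finset.sum_insert h, hδtadd, ih, Finset.sum_insert h]
  ext z
  simp only [Set.mem_setOf_eq]
  constructor
  · intro hz
    -- the denominator predicate
    set mem : TensorProduct k K kt → Prop :=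
      fun d => ∀ i, ∃ r : TensorProduct k K kt, φ d * z i = φ r with hmemdef
    obtain ⟨q, hq⟩ :=
      IsLocalization.exist_integer_multiples_of_finite
        (nonZeroDivisors (TensorProduct k K kt)) z
    have hqmem : mem (q : TensorProduct k K kt) := by
      intro i
      obtain ⟨r, hr⟩ := hq i
      refine ⟨r, ?_⟩
      have h2 : (q : TensorProduct k K kt) • z i
          = φ (q : TensorProduct k K kt) * z i := Algebra.smul_def _ _
      rw [← h2, ← hr]
    have hqne : (q : TensorProduct k K kt) ≠ 0 := nonZeroDivisors.coe_ne_zero q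
    -- pick a denominator of minimal support cardinality
    set P : ℕ → Prop :=
      fun m => ∃ d : TensorProduct k K kt, d ≠ 0 ∧ mem d ∧ (B.repr d).support.card = m
      with hPdef
    letI : DecidablePred P := fun _ => Classical.propDecidable _
    have hPex : ∃ m, P m := ⟨_, (q : TensorProduct k K kt), hqne, hqmem, rfl⟩
    obtain ⟨d, hd0, hdmem, hdcard⟩ := Nat.find_spec hPex
    have hdmin : ∀ d' : TensorProduct k K kt, d' ≠ 0 → mem d' →
        (B.repr d).support.card ≤ (B.repr d').support.card := by
      intro d' h1 h2
      rw [hdcard]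
      exact Nat.find_min' hPex ⟨d', h1, h2, rfl⟩
    have hsupne : (B.repr d).support.Nonempty := by
      rw [Finsupp.support_nonempty_iff]
      exact fun h => hd0 (by simpa using congrArg B.repr.symm h)
    obtain ⟨α₀, hα₀⟩ := hsupne
    set a₀ : K := B.repr d α₀ with ha₀def
    have ha₀ : a₀ ≠ 0 := Finsupp.mem_support_iff.mp hα₀
    set d' : TensorProduct k K kt := a₀⁻¹ • d with hd'def
    have hreprd' : B.repr d' = a₀⁻¹ • B.repr d := by rw [hd'def, map_smul]
    have hd'0 : d' ≠ 0 := by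
      intro h
      apply ha₀
      have h2 : B.repr d' α₀ = 0 := by rw [h, map_zero]; rfl
      rw [hreprd', Finsupp.smul_apply, smul_eq_mul, ← ha₀def] at h2
      rcases mul_eq_zero.mp h2 with h3 | h3
      · exact absurd h3 (inv_ne_zero ha₀)
      · exact h3
    have hd'mem : mem d' := by
      intro i
      obtain ⟨r, hr⟩ := hdmem i
      refine ⟨algebraMap K (TensorProduct k K kt) a₀⁻¹ * r, ?_⟩
      rw [hd'def, Algebra.smul_def, φ.map_mul, φ.map_mul, mul_assoc, hr]
    have hsupd' : (B.repr d').support = (B.repr d).support := by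
      rw [hreprd']
      exact Finsupp.support_smul_eq (inv_ne_zero ha₀)
    have hd'α₀ : B.repr d' α₀ = 1 := by
      rw [hreprd', Finsupp.smul_apply, smul_eq_mul, ← ha₀def, inv_mul_cancel₀ ha₀]
    -- denominators for d'
    choose r hr using hd'mem
    -- D d' is also a denominator
    have hDmem : mem (D d') := by
      intro i
      refine ⟨D (r i) - ∑ j, (A i j ⊗ₜ[k] (1 : kt)) * r j, ?_⟩
      have h1 : δt (φ d' * z i) = φ d' * δt (z i) + δt (φ d') * z i := hδtmul _ _
      rw [hr i, hδtφ, hδtφ, hz i] at h1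
      have h2 : φ d' * ∑ j, stmt11ιK (k := k) (K := K) (kt := kt) (A i j) * z j
          = φ (∑ j, (A i j ⊗ₜ[k] (1 : kt)) * r j) := by
        rw [Finset.mul_sum, map_sum φ]
        refine Finset.sum_congr rfl fun j _ => ?_
        rw [map_mul, mul_left_comm, hr j]
        rfl
      rw [h2] at h1
      rw [φ.map_sub]
      exact eq_sub_of_add_eq' h1.symm
    have hDd'0 : D d' = 0 := by
      by_contra hne
      have hsub : (B.repr (D d')).support ⊆ ((B.repr d').support).erase α₀ := by
        intro β hβ
        rw [Finsupp.mem_support_iff, hreprD] at hβ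
        refine Finset.mem_erase.mpr
          ⟨?_, Finsupp.mem_support_iff.mpr fun h0 => hβ (by rw [h0, hδ0])⟩
        rintro rfl
        exact hβ (by rw [hd'α₀, hδ1])
      have hlt : (B.repr (D d')).support.card < (B.repr d).support.card := by
        calc (B.repr (D d')).support.card ≤ (((B.repr d').support).erase α₀).card :=
              Finset.card_le_card hsub
          _ < (B.repr d').support.card :=
              Finset.card_erase_lt_of_mem (by rw [hsupd']; exact hα₀)
          _ = (B.repr d).support.card := by rw [hsupd']
      exact absurd (hdmin _ hne hDmem) (not_le.mpr hlt)
    -- the coefficients of d' are constants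
    have hconstd' : ∀ α, ∃ c : k, algebraMap k K c = B.repr d' α := by
      intro α
      refine (hconst _).mp ?_
      rw [← hreprD, hDd'0, map_zero]
      rfl
    choose e he using hconstd'
    -- d' = 1 ⊗ c₀ with c₀ ≠ 0
    set c₀ : kt := ∑ α ∈ (B.repr d').support, e α • b α with hc₀def
    have hd'eq : d' = (1 : K) ⊗ₜ[k] c₀ := by
      apply B.repr.injective
      ext β
      rw [Algebra.TensorProduct.basis_repr_tmul, one_smul, Finsupp.mapRange_apply]
      have hb : b.repr c₀ β = if β ∈ (B.repr d').support then e β else 0 := by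
        rw [hc₀def, map_sum, Finsupp.finset_sum_apply]
        have h1 : ∀ α ∈ (B.repr d').support, (b.repr (e α • b α)) β
            = if α = β then e α else 0 := by
          intro α _
          rw [map_smul, Module.Basis.repr_self, Finsupp.smul_apply, Finsupp.single_apply]
          split <;> simp
        rw [Finset.sum_congr rfl h1, Finset.sum_ite_eq' _ β e]
      rw [hb]
      split
      · next h => rw [he β]
      · next h => rw [map_zero]; exact Finsupp.notMem_support_iff.mp h
    have hc₀ : c₀ ≠ 0 := by
      intro h
      apply hd'0
      rw [hd'eq, h, TensorProduct.tmul_zero]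
    have hdinv : φ (((1 : K) ⊗ₜ[k] c₀⁻¹) * d') = 1 := by
      rw [hd'eq, Algebra.TensorProduct.tmul_mul_tmul, one_mul, inv_mul_cancel₀ hc₀,
        ← Algebra.TensorProduct.one_def, φ.map_one]
    set w : Fin n → TensorProduct k K kt := fun i => ((1 : K) ⊗ₜ[k] c₀⁻¹) * r i with hwdef
    have hw : ∀ i, z i = φ (w i) := by
      intro i
      calc z i = φ (((1 : K) ⊗ₜ[k] c₀⁻¹) * d') * z i := by rw [hdinv, one_mul]
        _ = φ ((1 : K) ⊗ₜ[k] c₀⁻¹) * (φ d' * z i) := by rw [φ.map_mul, mul_assoc]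
        _ = φ (w i) := by rw [hr i, hwdef, φ.map_mul]
    -- the system over R
    have hODER : ∀ i, D (w i) = ∑ j, (A i j ⊗ₜ[k] (1 : kt)) * w j := by
      intro i
      apply hφinj
      rw [← hδtφ, ← hw i, hz i, map_sum φ]
      refine Finset.sum_congr rfl fun j _ => ?_
      rw [φ.map_mul, ← hw j]
      rfl
    set T : Finset _ := Finset.univ.biUnion (fun i : Fin n => (B.repr (w i)).support)
      with hTdef
    let eqv : Fin T.card ≃ {x // x ∈ T} := (Fintype.equivFinOfCardEq (Fintype.card_coe T)).symm
    refine ⟨T.card, fun t => b (eqv t), fun t i => B.repr (w i) (eqv t), ?_, ?_⟩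
    · intro t i
      have h1 : B.repr (D (w i)) (eqv t : _) = δK (B.repr (w i) (eqv t : _)) := hreprD _ _
      rw [hODER i] at h1
      rw [← h1, map_sum, Finsupp.finset_sum_apply]
      refine Finset.sum_congr rfl fun j _ => ?_
      have hsm : (A i j ⊗ₜ[k] (1 : kt)) * w j = A i j • w j := by
        rw [Algebra.smul_def, Algebra.TensorProduct.algebraMap_apply, Algebra.algebraMap_self,
          RingHom.id_apply]
      rw [hsm, map_smul, Finsupp.smul_apply, smul_eq_mul]
    · intro i
      have hsum : (∑ t : Fin T.card,
            stmt11ιc (k := k) (K := K) (kt := kt) (b (eqv t)) * stmt11ιK (k := k) (K := K) (kt := kt) (B.repr (w i) (eqv t)))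
          = ∑ α ∈ T, stmt11ιc (k := k) (K := K) (kt := kt) (b α) * stmt11ιK (k := k) (K := K) (kt := kt) (B.repr (w i) α) := by
        rw [← Finset.sum_coe_sort T
          (fun α => stmt11ιc (k := k) (K := K) (kt := kt) (b α) * stmt11ιK (k := k) (K := K) (kt := kt) (B.repr (w i) α))]
        exact Equiv.sum_comp eqv
          (fun α : {x // x ∈ T} =>
            stmt11ιc (k := k) (K := K) (kt := kt) (b ↑α) * stmt11ιK (k := k) (K := K) (kt := kt) (B.repr (w i) ↑α))
      have hwsum : w i = ∑ α ∈ T, B.repr (w i) α • B α := by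
        have h1 := B.linearCombination_repr (w i)
        rw [Finsupp.linearCombination_apply, Finsupp.sum] at h1
        have h2 : ∀ α ∈ T, α ∉ (B.repr (w i)).support → B.repr (w i) α • B α = 0 := by
          intro α _ hα
          rw [Finsupp.notMem_support_iff.mp hα, zero_smul]
        have h3 := Finset.sum_subset (s₁ := (B.repr (w i)).support) (s₂ := T)
          (fun α hα => Finset.mem_biUnion.mpr ⟨i, Finset.mem_univ i, hα⟩) h2
        conv_lhs => rw [← h1]
        exact h3
      have hfin : φ (w i) = ∑ α ∈ T, stmt11ιc (k := k) (K := K) (kt := kt) (b α) *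
          stmt11ιK (k := k) (K := K) (kt := kt) (B.repr (w i) α) := by
        have h4 : φ (w i) = φ (∑ α ∈ T, B.repr (w i) α • B α) := by rw [← hwsum]
        rw [h4, map_sum φ]
        refine Finset.sum_congr rfl fun α _ => ?_
        rw [Algebra.TensorProduct.basis_repr_symm_apply', hφtmul, mul_comm]
      rw [hsum, ← hfin, hw i]
  · rintro ⟨m, c, v, hODE, hzeq⟩
    intro i
    rw [hzeq i, hδtsum]
    have step1 : ∀ t : Fin m, δt (stmt11ιc (k := k) (K := K) (kt := kt) (c t) * stmt11ιK (k := k) (K := K) (kt := kt) (v t i))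
        = stmt11ιc (k := k) (K := K) (kt := kt) (c t) * stmt11ιK (k := k) (K := K) (kt := kt) (δK (v t i)) := by
      intro t
      rw [hδtmul, hδtK, hδtk, zero_mul, add_zero]
    rw [Finset.sum_congr rfl fun t _ => step1 t]
    have step2 : ∀ t : Fin m, stmt11ιc (k := k) (K := K) (kt := kt) (c t) * stmt11ιK (k := k) (K := K) (kt := kt) (δK (v t i))
        = ∑ j, stmt11ιK (k := k) (K := K) (kt := kt) (A i j) *
            (stmt11ιc (k := k) (K := K) (kt := kt) (c t) * stmt11ιK (k := k) (K := K) (kt := kt) (v t j)) := by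
      intro t
      rw [hODE t i, hιKsum, Finset.mul_sum]
      refine Finset.sum_congr rfl fun j _ => ?_
      rw [hιKmul, mul_left_comm]
    rw [Finset.sum_congr rfl fun t _ => step2 t, Finset.sum_comm]
    refine Finset.sum_congr rfl fun j _ => ?_
    rw [← Finset.mul_sum, ← hzeq j]
end

section
/- Let K be a δσ-field of characteristic zero with k = K^δ, let A ∈ K^{n×n} and d ≥ 1. Let k̃ be a field extension of k, assume K ⊗_k k̃ is an integral domain, and let K̃ be its fraction field equipped with a derivation δ̃ extending δ and vanishing on k̃. Then δ(y) = Ay is σ^d-integrable over K, i.e. there exists B ∈ GLₙ(K) with δ(B) + B·A = ℏ_d·σ^d(A)·B, if and only if there exists B̃ ∈ GLₙ(K̃) with δ̃(B̃) + B̃·A = ℏ_d·σ^d(A)·B̃ (here ℏ_d ∈ K and the matrix σ^d(A) ∈ K^{n×n} are computed in K and viewed in K̃ via the natural embedding). -/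
/-- The image of `x ∈ K` in the fraction field of `K ⊗_k k̃`. -/
noncomputable def stmt12ιK {k K kt : Type*} [Field k] [Field K] [Field kt]
    [Algebra k K] [Algebra k kt] (x : K) : FractionRing (TensorProduct k K kt) :=
  algebraMap (TensorProduct k K kt) (FractionRing (TensorProduct k K kt))
    (TensorProduct.tmul k x (1 : kt))

/-- The image of `c ∈ k̃` in the fraction field of `K ⊗_k k̃`. -/
noncomputable def stmt12ιc {k K kt : Type*} [Field k] [Field K] [Field kt]
    [Algebra k K] [Algebra k kt] (c : kt) : FractionRing (TensorProduct k K kt) :=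
  algebraMap (TensorProduct k K kt) (FractionRing (TensorProduct k K kt))
    (TensorProduct.tmul k (1 : K) c)

open scoped TensorProduct

lemma keyPoly {k K : Type*} [Field k] [Field K] [Algebra k K] [Infinite k]
    {ι : Type*} (P : MvPolynomial ι K)
    (h : ∀ c : ι → k, MvPolynomial.eval (fun i => algebraMap k K (c i)) P = 0) :
    P = 0 := by
  classical
  set u : Module.Basis _ k K := Module.Basis.ofVectorSpace k K with hu
  suffices hcoeff : ∀ m, MvPolynomial.coeff m P = 0 by
    ext m; simp [hcoeff]
  intro m
  have key : ∀ j, (∑ m' ∈ P.support,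
      (MvPolynomial.monomial m' (u.repr (MvPolynomial.coeff m' P) j) : MvPolynomial ι k)) = 0 := by
    intro j
    apply MvPolynomial.funext (q := 0)
    intro c
    simp only [map_zero, map_sum]
    have : ∀ m' ∈ P.support,
        MvPolynomial.eval c (MvPolynomial.monomial m' (u.repr (MvPolynomial.coeff m' P) j))
          = u.repr ((∏ i ∈ m'.support, c i ^ m' i) • MvPolynomial.coeff m' P) j := by
      intro m' _
      rw [MvPolynomial.eval_monomial, map_smul]
      simp [Finsupp.prod, mul_comm]
    rw [Finset.sum_congr rfl this]
    have : (∑ m' ∈ P.support, u.repr ((∏ i ∈ m'.support, c i ^ m' i) • MvPolynomial.coeff m' P) j)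
        = u.repr (∑ m' ∈ P.support, ((∏ i ∈ m'.support, c i ^ m' i) • MvPolynomial.coeff m' P)) j := by
      rw [map_sum]; simp [Finsupp.finset_sum_apply]
    rw [this]
    have heval : (∑ m' ∈ P.support, ((∏ i ∈ m'.support, c i ^ m' i) • MvPolynomial.coeff m' P))
        = MvPolynomial.eval (fun i => algebraMap k K (c i)) P := by
      rw [MvPolynomial.eval_eq]
      apply Finset.sum_congr rfl
      intro m' _
      rw [Algebra.smul_def, mul_comm, map_prod]
      simp [map_pow]
    rw [heval, h c]
    simp
  by_cases hm : m ∈ P.support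
  · have : ∀ j, u.repr (MvPolynomial.coeff m P) j = 0 := by
      intro j
      have := key j
      have h2 := congrArg (MvPolynomial.coeff m) this
      rw [MvPolynomial.coeff_zero, MvPolynomial.coeff_sum] at h2
      rw [Finset.sum_eq_single m] at h2
      · simpa [MvPolynomial.coeff_monomial] using h2
      · intro b _ hb
        simp [MvPolynomial.coeff_monomial, hb]
      · intro hmm; exact absurd hm hmm
    have : u.repr (MvPolynomial.coeff m P) = 0 := by ext j; simpa using this j
    exact u.repr.map_eq_zero_iff.mp this
  · simpa [MvPolynomial.mem_support_iff, not_not] using hm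


lemma stmt12_simple {k K kt : Type*} [Field k] [Field K] [Field kt]
    [Algebra k K] [Algebra k kt]
    (δK : K → K)
    (hδadd : ∀ a b : K, δK (a + b) = δK a + δK b)
    (hδmul : ∀ a b : K, δK (a * b) = a * δK b + δK a * b)
    (hconst : ∀ a : K, δK a = 0 ↔ ∃ c : k, algebraMap k K c = a)
    (δR : TensorProduct k K kt →ₗ[k] TensorProduct k K kt)
    (hrepr : ∀ (r : TensorProduct k K kt) (i),
      (Algebra.TensorProduct.basis K (Module.Basis.ofVectorSpace k kt)).repr (δR r) i
        = δK ((Algebra.TensorProduct.basis K (Module.Basis.ofVectorSpace k kt)).repr r i))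
    (I : Ideal (TensorProduct k K kt)) (hI : ∀ r ∈ I, δR r ∈ I)
    (r : TensorProduct k K kt) (hr : r ∈ I) (hr0 : r ≠ 0) :
    (1 : TensorProduct k K kt) ∈ I := by
  classical
  have hδ0 : δK 0 = 0 := by
    have h := hδadd 0 0
    rw [add_zero] at h
    have h2 : δK 0 + δK 0 = δK 0 + 0 := by rw [add_zero, ← h]
    exact add_left_cancel h2
  have hδ1 : δK 1 = 0 := by
    have h := hδmul 1 1
    rw [mul_one, one_mul, mul_one] at h
    have h2 : δK 1 + δK 1 = δK 1 + 0 := by rw [add_zero, ← h]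
    exact add_left_cancel h2
  set e := Module.Basis.ofVectorSpace k kt with he
  set b := Algebra.TensorProduct.basis K e with hb
  suffices H : ∀ N : ℕ, ∀ r ∈ I, r ≠ 0 → (b.repr r).support.card = N →
      (1 : TensorProduct k K kt) ∈ I from H _ r hr hr0 rfl
  intro N
  induction N using Nat.strong_induction_on with
  | _ N ih =>
  intro r hr hr0 hcard
  have hrepr0 : b.repr r ≠ 0 := fun h => hr0 (b.repr.map_eq_zero_iff.mp h)
  have hsupp : (b.repr r).support.Nonempty := by
    rw [Finsupp.support_nonempty_iff]; exact hrepr0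
  obtain ⟨i₀, hi₀⟩ := hsupp
  set x := b.repr r i₀ with hx
  have hx0 : x ≠ 0 := Finsupp.mem_support_iff.mp hi₀
  set r' := algebraMap K (TensorProduct k K kt) x⁻¹ * r with hr'def
  have hr' : r' ∈ I := I.mul_mem_left _ hr
  have hreprr' : b.repr r' = x⁻¹ • b.repr r := by
    rw [hr'def, ← Algebra.smul_def, map_smul]
  have hsuppr' : (b.repr r').support = (b.repr r).support := by
    rw [hreprr']; exact Finsupp.support_smul_eq (inv_ne_zero hx0)
  have hr'i₀ : b.repr r' i₀ = 1 := by
    rw [hreprr', Finsupp.smul_apply, smul_eq_mul, ← hx, inv_mul_cancel₀ hx0]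
  have hr'0 : r' ≠ 0 := by
    intro h
    rw [h] at hr'i₀
    simp at hr'i₀
  set s := δR r' with hsdef
  have hs : s ∈ I := hI r' hr'
  have hsub : (b.repr s).support ⊆ (b.repr r').support.erase i₀ := by
    intro i hi
    rw [Finsupp.mem_support_iff, hsdef, hrepr] at hi
    rw [Finset.mem_erase, Finsupp.mem_support_iff]
    constructor
    · intro h; rw [h, hr'i₀] at hi; exact hi hδ1
    · intro h; rw [h, hδ0] at hi; exact hi rfl
  have hcard' : (b.repr s).support.card < N := by
    calc (b.repr s).support.card ≤ ((b.repr r').support.erase i₀).card :=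
          Finset.card_le_card hsub
      _ < (b.repr r').support.card := by
          apply Finset.card_erase_lt_of_mem
          rw [hsuppr']; exact hi₀
      _ = N := by rw [hsuppr', hcard]
  by_cases hs0 : s = 0
  · -- all coefficients of r' are constants
    have hcoef : ∀ i, δK (b.repr r' i) = 0 := by
      intro i
      have := hrepr r' i
      rw [← hsdef, hs0] at this
      simpa using this.symm
    have hch : ∀ i, ∃ cc : k, algebraMap k K cc = b.repr r' i :=
      fun i => (hconst _).mp (hcoef i)
    choose c hc using hch
    set u : kt := ∑ i ∈ (b.repr r').support, c i • e i with hu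
    have hr'u : r' = (1 : K) ⊗ₜ[k] u := by
      conv_lhs => rw [← b.linearCombination_repr r']
      rw [Finsupp.linearCombination_apply, Finsupp.sum]
      rw [hu, TensorProduct.tmul_sum]
      apply Finset.sum_congr rfl
      intro i _
      rw [← hc, hb, Algebra.TensorProduct.basis_apply]
      rw [TensorProduct.smul_tmul', ← TensorProduct.smul_tmul]
      congr 1
      · rw [Algebra.smul_def, mul_one, Algebra.smul_def, mul_one]
        simp
    have hu0 : u ≠ 0 := by
      intro h
      rw [h, TensorProduct.tmul_zero] at hr'u
      exact hr'0 hr'u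
    have hone : ((1 : K) ⊗ₜ[k] u⁻¹) * r' = 1 := by
      rw [hr'u, Algebra.TensorProduct.tmul_mul_tmul, one_mul, inv_mul_cancel₀ hu0,
        Algebra.TensorProduct.one_def]
    exact hone ▸ I.mul_mem_left _ hr'
  · exact ih _ hcard' s hs hs0 rfl


set_option maxHeartbeats 1000000 in
set_option synthInstance.maxHeartbeats 400000 in

set_option synthInstance.maxHeartbeats 400000 in
lemma stmt12_forward {k K kt : Type*} [Field k] [Field K] [Field kt]
    [Algebra k K] [Algebra k kt] [IsDomain (TensorProduct k K kt)]
    (δK : K → K)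
    (δt : FractionRing (TensorProduct k K kt) → FractionRing (TensorProduct k K kt))
    (hδtK : ∀ x : K, δt (stmt12ιK (kt := kt) x) = stmt12ιK (kt := kt) (δK x))
    {n : ℕ} (A M B : Matrix (Fin n) (Fin n) K)
    (hB : IsUnit B) (hEq : B.map δK + B * A = M * B) :
    ∃ Bt : Matrix (Fin n) (Fin n) (FractionRing (TensorProduct k K kt)), IsUnit Bt ∧
      Bt.map δt + Bt * A.map (stmt12ιK (kt := kt)) =
        (M.map (stmt12ιK (kt := kt))) * Bt := by
  set ι' : K →+* FractionRing (TensorProduct k K kt) :=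
    (algebraMap (TensorProduct k K kt) (FractionRing (TensorProduct k K kt))).comp
      (algebraMap K (TensorProduct k K kt)) with hι'
  have hfun : (stmt12ιK (k := k) (K := K) (kt := kt)) = ⇑ι' := rfl
  rw [hfun]
  refine ⟨B.map ι', ?_, ?_⟩
  · have := hB.map (RingHom.mapMatrix (m := Fin n) ι')
    simpa [RingHom.mapMatrix_apply] using this
  · ext p q
    have hd : δt (ι' (B p q)) = ι' (δK (B p q)) := by
      have := hδtK (B p q); rwa [hfun] at this
    have hent : ι' ((B.map δK + B * A) p q) = ι' ((M * B) p q) := by rw [hEq]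
    simp only [Matrix.add_apply, Matrix.map_apply, Matrix.mul_apply, map_add, map_sum,
      map_mul] at hent
    simpa [Matrix.add_apply, Matrix.map_apply, Matrix.mul_apply, hd] using hent

set_option maxHeartbeats 1000000 in
set_option synthInstance.maxHeartbeats 400000 in
lemma stmt12_backward {k K kt : Type*} [Field k] [Field K] [Field kt] [CharZero K]
    [Algebra k K] [Algebra k kt] [IsDomain (TensorProduct k K kt)]
    (δK : K → K)
    (hδadd : ∀ a b : K, δK (a + b) = δK a + δK b)
    (hδmul : ∀ a b : K, δK (a * b) = a * δK b + δK a * b)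
    (hconst : ∀ a : K, δK a = 0 ↔ ∃ c : k, algebraMap k K c = a)
    (δt : FractionRing (TensorProduct k K kt) → FractionRing (TensorProduct k K kt))
    (hδtadd : ∀ a b, δt (a + b) = δt a + δt b)
    (hδtmul : ∀ a b, δt (a * b) = a * δt b + δt a * b)
    (hδtK : ∀ x : K, δt (stmt12ιK (kt := kt) x) = stmt12ιK (kt := kt) (δK x))
    (hδtk : ∀ c : kt, δt (stmt12ιc (K := K) c) = 0)
    {n : ℕ} (A M : Matrix (Fin n) (Fin n) K)
    (Bt : Matrix (Fin n) (Fin n) (FractionRing (TensorProduct k K kt)))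
    (hBt : IsUnit Bt)
    (hEq : Bt.map δt + Bt * A.map (stmt12ιK (kt := kt)) = (M.map (stmt12ιK (kt := kt))) * Bt) :
    ∃ B : Matrix (Fin n) (Fin n) K, IsUnit B ∧ B.map δK + B * A = M * B := by
  classical
  haveI : CharZero k := (algebraMap k K).charZero
  set φ : TensorProduct k K kt →+* FractionRing (TensorProduct k K kt) :=
    algebraMap (TensorProduct k K kt) (FractionRing (TensorProduct k K kt)) with hφ
  have hφinj : Function.Injective φ :=
    IsFractionRing.injective (TensorProduct k K kt) (FractionRing (TensorProduct k K kt))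
  have hιφ : ∀ x : K, stmt12ιK (kt := kt) x = φ (algebraMap K (TensorProduct k K kt) x) :=
    fun x => rfl
  -- basic facts about δK
  have hδ0 : δK 0 = 0 := by
    have h := hδadd 0 0
    rw [add_zero] at h
    exact add_left_cancel (show δK 0 + δK 0 = δK 0 + 0 by rw [add_zero, ← h])
  have hδk0 : ∀ c : k, δK (algebraMap k K c) = 0 := fun c => (hconst _).mpr ⟨c, rfl⟩
  have hδsmul : ∀ (c : k) (a : K), δK (c • a) = c • δK a := by
    intro c a
    rw [Algebra.smul_def, Algebra.smul_def, hδmul, hδk0, zero_mul, add_zero]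
  set δKl : K →ₗ[k] K :=
    { toFun := δK, map_add' := hδadd, map_smul' := hδsmul } with hδKl
  set δR : TensorProduct k K kt →ₗ[k] TensorProduct k K kt :=
    TensorProduct.map δKl LinearMap.id with hδR
  have hδRtmul : ∀ (x : K) (c : kt), δR (x ⊗ₜ[k] c) = δK x ⊗ₜ[k] c := by
    intro x c; rw [hδR, TensorProduct.map_tmul]; rfl
  have hδt0 : δt (0 : FractionRing (TensorProduct k K kt)) = 0 := by
    have h := hδtadd 0 0
    rw [add_zero] at h
    exact add_left_cancel (show δt 0 + δt 0 = δt 0 + 0 by rw [add_zero, ← h])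
  have hcompat : ∀ r : TensorProduct k K kt, δt (φ r) = φ (δR r) := by
    intro r
    induction r using TensorProduct.induction_on with
    | zero => rw [map_zero, hδt0, map_zero, map_zero]
    | tmul x c =>
      have h1 : ∀ y : K, φ (y ⊗ₜ[k] c) = stmt12ιK (kt := kt) y * stmt12ιc (K := K) c := by
        intro y
        rw [stmt12ιK, stmt12ιc, hφ, ← map_mul, Algebra.TensorProduct.tmul_mul_tmul,
          one_mul, mul_one]
      rw [h1, hδtmul, hδtk, mul_zero, zero_add, hδtK, hδRtmul, h1]
    | add a b ha hb => rw [map_add, hδtadd, ha, hb, map_add, map_add]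
  -- basis of kt over k and induced basis of the tensor product over K
  set e := Module.Basis.ofVectorSpace k kt with he
  set b := Algebra.TensorProduct.basis K e with hb
  have hrepr : ∀ (r : TensorProduct k K kt) i, b.repr (δR r) i = δK (b.repr r i) := by
    intro r i
    induction r using TensorProduct.induction_on with
    | zero => rw [map_zero, map_zero]; simp [hδ0]
    | tmul x c =>
      rw [hδRtmul, hb, Algebra.TensorProduct.basis_repr_tmul,
        Algebra.TensorProduct.basis_repr_tmul]
      rw [Finsupp.smul_apply, Finsupp.smul_apply, Finsupp.mapRange_apply, smul_eq_mul,
        smul_eq_mul, hδmul, hδk0, mul_zero, zero_add]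
    | add a b ha hb =>
      simp only [map_add, Finsupp.add_apply, ha, hb, hδadd]
  -- The "denominator ideal"
  set T := φ.range with hT
  set Icar : Set (TensorProduct k K kt) := {r | ∀ p q, φ r * Bt p q ∈ T} with hIcar
  have hIstab : ∀ r, r ∈ Icar → δR r ∈ Icar := by
    intro r hrT p q
    have hEq' : Bt.map δt = (M.map (stmt12ιK (kt := kt))) * Bt
        - Bt * A.map (stmt12ιK (kt := kt)) := eq_sub_of_add_eq hEq
    have hder : δt (Bt p q) = (∑ l, stmt12ιK (kt := kt) (M p l) * Bt l q)
        - ∑ l, Bt p l * stmt12ιK (kt := kt) (A l q) := by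
      have := congrArg (fun X => X p q) hEq'
      simpa [Matrix.sub_apply, Matrix.map_apply, Matrix.mul_apply] using this
    have hmem : φ r * δt (Bt p q) ∈ T := by
      rw [hder, mul_sub, Finset.mul_sum, Finset.mul_sum]
      apply sub_mem
      · apply Subring.sum_mem
        intro l _
        have h3 : φ r * (stmt12ιK (kt := kt) (M p l) * Bt l q)
            = stmt12ιK (kt := kt) (M p l) * (φ r * Bt l q) := by ring
        rw [h3, hιφ]
        exact T.mul_mem ⟨_, rfl⟩ (hrT l q)
      · apply Subring.sum_mem
        intro l _
        have h3 : φ r * (Bt p l * stmt12ιK (kt := kt) (A l q))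
            = (φ r * Bt p l) * stmt12ιK (kt := kt) (A l q) := by ring
        rw [h3, hιφ]
        exact T.mul_mem (hrT p l) ⟨_, rfl⟩
    obtain ⟨s, hsp⟩ := hrT p q
    have h2 := hδtmul (φ r) (Bt p q)
    rw [← hsp, hcompat, hcompat] at h2
    have h4 : φ (δR r) * Bt p q = φ (δR s) - φ r * δt (Bt p q) := by
      rw [eq_sub_iff_add_eq]
      linear_combination h2.symm
    rw [h4]
    exact sub_mem ⟨δR s, rfl⟩ hmem
  set I : Ideal (TensorProduct k K kt) :=
    { carrier := Icar
      add_mem' := by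
        intro a b ha hb
        intro p q
        rw [map_add, add_mul]
        exact add_mem (ha p q) (hb p q)
      zero_mem' := by
        intro p q
        rw [map_zero, zero_mul]
        exact zero_mem T
      smul_mem' := by
        intro a r hr p q
        rw [smul_eq_mul, map_mul, mul_assoc]
        exact T.mul_mem ⟨a, rfl⟩ (hr p q) } with hI
  obtain ⟨dm, hdm⟩ := IsLocalization.exist_integer_multiples_of_finite
    (nonZeroDivisors (TensorProduct k K kt)) (fun pq : Fin n × Fin n => Bt pq.1 pq.2)
  have hdmI : (dm : TensorProduct k K kt) ∈ I := by
    intro p q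
    have h5 := hdm (p, q)
    rwa [Algebra.smul_def] at h5
  have hdm0 : (dm : TensorProduct k K kt) ≠ 0 := nonZeroDivisors.coe_ne_zero dm
  have hone : (1 : TensorProduct k K kt) ∈ I :=
    stmt12_simple δK hδadd hδmul hconst δR hrepr I (fun r hr => hIstab r hr) dm hdmI hdm0
  have hent : ∀ p q, ∃ s, φ s = Bt p q := by
    intro p q
    have h6 : φ 1 * Bt p q ∈ T := hone p q
    rwa [map_one, one_mul] at h6
  choose C hC using hent
  -- the matrix equation over the tensor product
  set ρ : K →+* TensorProduct k K kt := algebraMap K (TensorProduct k K kt) with hρ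
  have hEqR : ∀ p q, δR (C p q) + ∑ l, C p l * ρ (A l q) = ∑ l, ρ (M p l) * C l q := by
    intro p q
    apply hφinj
    have lhs : φ (δR (C p q) + ∑ l, C p l * ρ (A l q))
        = δt (Bt p q) + ∑ l, Bt p l * stmt12ιK (kt := kt) (A l q) := by
      rw [map_add, ← hcompat, hC, map_sum]
      congr 1
      apply Finset.sum_congr rfl
      intro l _
      rw [map_mul, hC, ← hιφ]
    have rhs : φ (∑ l, ρ (M p l) * C l q) = ∑ l, stmt12ιK (kt := kt) (M p l) * Bt l q := by
      rw [map_sum]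
      apply Finset.sum_congr rfl
      intro l _
      rw [map_mul, hC, ← hιφ]
    rw [lhs, rhs]
    have hEqent := congrArg (fun X => X p q) hEq
    simpa [Matrix.add_apply, Matrix.map_apply, Matrix.mul_apply] using hEqent
  -- coordinate matrices over K
  set Bc : ↑(Module.Basis.ofVectorSpaceIndex k kt) → Matrix (Fin n) (Fin n) K :=
    fun i => Matrix.of (fun p q => b.repr (C p q) i) with hBc
  have hterm1 : ∀ (i : ↑(Module.Basis.ofVectorSpaceIndex k kt)) (x : K)
      (r : TensorProduct k K kt), b.repr (r * ρ x) i = x * b.repr r i := by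
    intro i x r
    rw [mul_comm, hρ, ← Algebra.smul_def, map_smul, Finsupp.smul_apply, smul_eq_mul]
  have hBi : ∀ i, (Bc i).map δK + (Bc i) * A = M * (Bc i) := by
    intro i
    ext p q
    have h0 : b.repr (δR (C p q)) i + ∑ l, b.repr (C p l * ρ (A l q)) i
        = ∑ l, b.repr (ρ (M p l) * C l q) i := by
      have h7 := congrArg (fun r => b.repr r i) (hEqR p q)
      simpa [map_add, map_sum, Finsupp.add_apply, Finsupp.finset_sum_apply] using h7
    rw [hrepr] at h0
    have hL : ∀ l, b.repr (C p l * ρ (A l q)) i = Bc i p l * A l q := by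
      intro l; rw [hterm1, mul_comm]; rfl
    have hR : ∀ l, b.repr (ρ (M p l) * C l q) i = M p l * Bc i l q := by
      intro l; rw [mul_comm (ρ (M p l)), hterm1]; rfl
    rw [Finset.sum_congr rfl (fun l _ => hL l), Finset.sum_congr rfl (fun l _ => hR l)] at h0
    simpa [Matrix.map_apply, Matrix.add_apply, Matrix.mul_apply, hBc, Matrix.of_apply] using h0
  -- the determinant polynomial
  set S : Finset ↑(Module.Basis.ofVectorSpaceIndex k kt) :=
    Finset.univ.biUnion (fun pq : Fin n × Fin n => (b.repr (C pq.1 pq.2)).support) with hS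
  have hCsum : ∀ p q, C p q = ∑ i ∈ S, b.repr (C p q) i • b i := by
    intro p q
    have hsub : (b.repr (C p q)).support ⊆ S := by
      intro i hi
      rw [hS]
      exact Finset.mem_biUnion.mpr ⟨(p, q), Finset.mem_univ _, hi⟩
    conv_lhs => rw [← b.linearCombination_repr (C p q)]
    rw [Finsupp.linearCombination_apply]
    exact Finsupp.sum_of_support_subset _ hsub _ (by intro i _; rw [zero_smul])
  set Pm : Matrix (Fin n) (Fin n) (MvPolynomial ↑(Module.Basis.ofVectorSpaceIndex k kt) K) :=
    Matrix.of (fun p q => ∑ i ∈ S,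
      MvPolynomial.C (b.repr (C p q) i) * MvPolynomial.X i) with hPm
  set P := Pm.det with hP
  set g : ↑(Module.Basis.ofVectorSpaceIndex k kt) → TensorProduct k K kt :=
    fun i => (b i : TensorProduct k K kt) with hg
  have hPmmap : Pm.map (MvPolynomial.aeval g) = Matrix.of C := by
    ext p q
    simp only [hPm, Matrix.map_apply, Matrix.of_apply, map_sum, map_mul, MvPolynomial.aeval_C,
      MvPolynomial.aeval_X]
    conv_rhs => rw [hCsum p q]
    apply Finset.sum_congr rfl
    intro i _
    rw [Algebra.smul_def]
  have hdetC : (Matrix.of C).det ≠ 0 := by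
    intro h
    have h8 := RingHom.map_det φ (Matrix.of C)
    rw [RingHom.mapMatrix_apply] at h8
    have h9 : (Matrix.of C).map ⇑φ = Bt := by
      ext p q
      exact hC p q
    rw [h9, h] at h8
    have h10 := (Matrix.isUnit_iff_isUnit_det Bt).mp hBt
    rw [← h8, map_zero] at h10
    exact h10.ne_zero rfl
  have haeval : (MvPolynomial.aeval g) P = (Matrix.of C).det := by
    rw [hP]
    have h11 := RingHom.map_det (MvPolynomial.aeval g).toRingHom Pm
    rw [RingHom.mapMatrix_apply] at h11
    have h12 : Pm.map ⇑(MvPolynomial.aeval g).toRingHom = Pm.map ⇑(MvPolynomial.aeval g) := rfl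
    rw [h12, hPmmap] at h11
    exact h11
  have hP0 : P ≠ 0 := by
    intro h
    apply hdetC
    rw [← haeval, h, map_zero]
  have hkpoint : ∃ c : ↑(Module.Basis.ofVectorSpaceIndex k kt) → k,
      MvPolynomial.eval (fun i => algebraMap k K (c i)) P ≠ 0 := by
    by_contra hcon
    push_neg at hcon
    exact hP0 (keyPoly P hcon)
  obtain ⟨c, hc0⟩ := hkpoint
  set Bf : Matrix (Fin n) (Fin n) K :=
    Matrix.of (fun p q => ∑ i ∈ S, b.repr (C p q) i * algebraMap k K (c i)) with hBf
  have hBfdet : Bf.det ≠ 0 := by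
    have h13 : Pm.map (MvPolynomial.eval (fun i => algebraMap k K (c i))) = Bf := by
      ext p q
      simp only [hPm, Matrix.map_apply, Matrix.of_apply, map_sum, map_mul,
        MvPolynomial.eval_C, MvPolynomial.eval_X, hBf]
    have h14 := RingHom.map_det (MvPolynomial.eval (fun i => algebraMap k K (c i))) Pm
    rw [RingHom.mapMatrix_apply, h13] at h14
    rw [← hP] at h14
    intro h
    rw [h] at h14
    exact hc0 h14
  have hBfunit : IsUnit Bf := (Matrix.isUnit_iff_isUnit_det Bf).mpr
    (isUnit_iff_ne_zero.mpr hBfdet)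
  refine ⟨Bf, hBfunit, ?_⟩
  set δKh : K →+ K := AddMonoidHom.mk' δK (fun a b => hδadd a b) with hδKh
  ext p q
  have hterm : ∀ i, δK (b.repr (C p q) i * algebraMap k K (c i))
      = δK (b.repr (C p q) i) * algebraMap k K (c i) := by
    intro i
    rw [hδmul, hδk0, mul_zero, zero_add]
  simp only [Matrix.map_apply, Matrix.add_apply, Matrix.mul_apply, hBf, Matrix.of_apply]
  have hδsum : δK (∑ i ∈ S, b.repr (C p q) i * algebraMap k K (c i))
      = ∑ i ∈ S, δK (b.repr (C p q) i * algebraMap k K (c i)) :=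
    map_sum δKh _ _
  rw [hδsum, Finset.sum_congr rfl (fun i _ => hterm i)]
  have e1 : ∑ l, (∑ i ∈ S, b.repr (C p l) i * algebraMap k K (c i)) * A l q
      = ∑ i ∈ S, (∑ l, b.repr (C p l) i * A l q) * algebraMap k K (c i) := by
    simp_rw [Finset.sum_mul]
    rw [Finset.sum_comm]
    apply Finset.sum_congr rfl
    intro i _
    apply Finset.sum_congr rfl
    intro l _
    ring
  have e2 : ∑ l, M p l * (∑ i ∈ S, b.repr (C l q) i * algebraMap k K (c i))
      = ∑ i ∈ S, (∑ l, M p l * b.repr (C l q) i) * algebraMap k K (c i) := by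
    simp_rw [Finset.mul_sum]
    rw [Finset.sum_comm]
    apply Finset.sum_congr rfl
    intro i _
    rw [Finset.sum_mul]
    apply Finset.sum_congr rfl
    intro l _
    ring
  rw [e1, e2, ← Finset.sum_add_distrib]
  apply Finset.sum_congr rfl
  intro i _
  rw [← add_mul]
  congr 1
  have h15 := congrArg (fun X => X p q) (hBi i)
  simpa [Matrix.map_apply, Matrix.add_apply, Matrix.mul_apply, hBc, Matrix.of_apply] using h15

/-- descent of σ^d-integrability along a constant field extension.
Let `K` be a δσ-field of characteristic zero with constants `k = K^δ`, `A ∈ K^{n×n}`,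
`d ≥ 1`, `k̃` a field extension of `k` with `K ⊗_k k̃` a domain, and `K̃` its fraction
field with derivation `δ̃` extending `δ` and vanishing on `k̃`.  Then `δ(y) = A·y` is
σ^d-integrable over `K` (∃ `B ∈ GLₙ(K)` with `δ(B) + B·A = ℏ_d·σ^d(A)·B`) iff there is
`B̃ ∈ GLₙ(K̃)` with `δ̃(B̃) + B̃·A = ℏ_d·σ^d(A)·B̃`. -/
theorem stmt_12 {k K kt : Type*} [Field k] [Field K] [Field kt] [CharZero K]
    [Algebra k K] [Algebra k kt]
    [IsDomain (TensorProduct k K kt)]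
    (δK : K → K) (σK : K →+* K) (ℏ : K)
    (hδadd : ∀ a b : K, δK (a + b) = δK a + δK b)
    (hδmul : ∀ a b : K, δK (a * b) = a * δK b + δK a * b)
    (hℏ0 : ℏ ≠ 0) (hδℏ : δK ℏ = 0)
    (hcommK : ∀ r : K, δK (σK r) = ℏ * σK (δK r))
    (hconst : ∀ a : K, δK a = 0 ↔ ∃ c : k, algebraMap k K c = a)
    (δt : FractionRing (TensorProduct k K kt) → FractionRing (TensorProduct k K kt))
    (hδtadd : ∀ a b, δt (a + b) = δt a + δt b)
    (hδtmul : ∀ a b, δt (a * b) = a * δt b + δt a * b)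
    (hδtK : ∀ x : K, δt (stmt12ιK (kt := kt) x) = stmt12ιK (kt := kt) (δK x))
    (hδtk : ∀ c : kt, δt (stmt12ιc (K := K) c) = 0)
    (n : ℕ) (A : Matrix (Fin n) (Fin n) K) (d : ℕ) (hd : 1 ≤ d) :
    (∃ B : Matrix (Fin n) (Fin n) K, IsUnit B ∧
        B.map δK + B * A = hbarSeq σK ℏ d • (A.map ((⇑σK)^[d])) * B) ↔
    (∃ Bt : Matrix (Fin n) (Fin n) (FractionRing (TensorProduct k K kt)), IsUnit Bt ∧
        Bt.map δt + Bt * A.map (stmt12ιK (kt := kt)) =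
          stmt12ιK (k := k) (kt := kt) (hbarSeq σK ℏ d) •
            ((A.map ((⇑σK)^[d])).map (stmt12ιK (kt := kt))) * Bt) := by
  set M : Matrix (Fin n) (Fin n) K := hbarSeq σK ℏ d • (A.map ((⇑σK)^[d])) with hM
  have hmul : ∀ x y : K, stmt12ιK (k := k) (kt := kt) (x * y)
      = stmt12ιK (k := k) (kt := kt) x * stmt12ιK (k := k) (kt := kt) y := by
    intro x y
    have h : (stmt12ιK (k := k) (K := K) (kt := kt))
        = ⇑((algebraMap (TensorProduct k K kt) (FractionRing (TensorProduct k K kt))).comp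
            (algebraMap K (TensorProduct k K kt))) := rfl
    rw [h, map_mul]
  have hMmap : stmt12ιK (k := k) (kt := kt) (hbarSeq σK ℏ d) •
        ((A.map ((⇑σK)^[d])).map (stmt12ιK (k := k) (kt := kt)))
      = M.map (stmt12ιK (k := k) (kt := kt)) := by
    ext p q
    simp only [Matrix.smul_apply, Matrix.map_apply, hM, smul_eq_mul]
    rw [← hmul]
  constructor
  · rintro ⟨B, hB, hEqK⟩
    obtain ⟨Bt, h1, h2⟩ := stmt12_forward δK δt hδtK A M B hB hEqK
    refine ⟨Bt, h1, ?_⟩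
    rw [hMmap]
    exact h2
  · rintro ⟨Bt, hBtu, hEqt⟩
    rw [hMmap] at hEqt
    exact stmt12_backward δK hδadd hδmul hconst δt hδtadd hδtmul hδtK hδtk A M Bt hBtu hEqt
end

section
/- Let k be a field equipped with a ring endomorphism σ, and suppose k is linearly σ-closed: for every n ≥ 1 and every B ∈ GLₙ(k) there exists Y ∈ GLₙ(k) with σ(Y) = B·Y (σ applied entrywise). Then for every integer d ≥ 1, the field k is linearly σ^d-closed: for every n ≥ 1 and every B ∈ GLₙ(k) there exists Y ∈ GLₙ(k) with σ^d(Y) = B·Y. -/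
open Matrix

/-- From a matrix with surjective `mulVec` (full row rank), extract an invertible
square submatrix by selecting columns. -/
lemma exists_isUnit_submatrix {k : Type*} [Field k] {n : ℕ} {ι : Type*} [Fintype ι]
    [DecidableEq ι] (W : Matrix (Fin n) ι k) (h : Function.Surjective W.mulVec) :
    ∃ φ : Fin n → ι, IsUnit (W.submatrix id φ) := by
  have hspan : Submodule.span k (Set.range Wᵀ) = ⊤ := by
    change Submodule.span k (Set.range (Matrix.col W)) = ⊤
    rw [← Matrix.range_mulVecLin, LinearMap.range_eq_top]
    exact h
  obtain ⟨s, hsub, hspan', hli⟩ := exists_linearIndependent k (Set.range Wᵀ)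
  rw [hspan] at hspan'
  have hbs : Submodule.span k (Set.range ((↑) : s → (Fin n → k))) = ⊤ := by
    rwa [Subtype.range_coe]
  let b : Module.Basis s k (Fin n → k) := Module.Basis.mk hli (by rw [hbs])
  have : Fintype s := FiniteDimensional.fintypeBasisIndex b
  have hcard : Fintype.card s = n := by
    have := Module.finrank_eq_card_basis b
    rw [Module.finrank_fin_fun] at this
    omega
  let g : Fin n ≃ s := (Fintype.equivFinOfCardEq hcard).symm
  have hchoice : ∀ a : Fin n, ∃ q : ι, Wᵀ q = (g a : Fin n → k) := fun a => hsub (g a).2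
  choose φ hφ using hchoice
  refine ⟨φ, ?_⟩
  rw [← Matrix.linearIndependent_cols_iff_isUnit]
  have hcols : (fun a => (W.submatrix id φ)ᵀ a) = fun a => ((g a : Fin n → k)) := by
    funext a
    rw [← hφ a]
    rfl
  change LinearIndependent k (fun a => (W.submatrix id φ)ᵀ a)
  rw [hcols]
  exact hli.comp g g.injective

/-- a linearly σ-closed σ-field is linearly σ^d-closed for every `d ≥ 1`:
if every linear difference system `σ(Y) = B·Y` over `k` has a fundamental solution
matrix in `k`, then so does every system `σ^d(Y) = B·Y`. -/
theorem stmt_13 {k : Type*} [Field k] (σ : k →+* k)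
    (hclosed : ∀ (n : ℕ), 1 ≤ n → ∀ B : Matrix (Fin n) (Fin n) k, IsUnit B →
      ∃ Y : Matrix (Fin n) (Fin n) k, IsUnit Y ∧ Y.map ⇑σ = B * Y)
    (d : ℕ) (hd : 1 ≤ d) :
    ∀ (n : ℕ), 1 ≤ n → ∀ B : Matrix (Fin n) (Fin n) k, IsUnit B →
      ∃ Y : Matrix (Fin n) (Fin n) k, IsUnit Y ∧ Y.map ((⇑σ)^[d]) = B * Y := by
  obtain ⟨e, rfl⟩ : ∃ e, d = e + 1 := ⟨d - 1, by omega⟩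
  intro n hn B hB
  -- block data for the companion system of size (e+1)*n
  let Mb : Fin (e+1) → Matrix (Fin n) (Fin n) k := fun i => if i = 0 then B else 1
  have hMb : ∀ i, IsUnit (Mb i) := by
    intro i; by_cases h : i = 0 <;> simp [Mb, h, hB]
  let prev : Fin (e+1) → Fin (e+1) := fun i => if i = 0 then Fin.last e else i - 1
  have hprev : Function.Surjective prev := by
    intro j
    by_cases hj : j = Fin.last e
    · exact ⟨0, by simp [prev, hj]⟩
    · refine ⟨j + 1, ?_⟩
      have h1 : j + 1 ≠ 0 := by
        intro h
        apply hj
        have h2 : j = 0 - 1 := by rw [← h, add_sub_cancel_right]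
        have h3 : (0 : Fin (e+1)) - 1 = Fin.last e :=
          (eq_sub_iff_add_eq.mpr (Fin.last_add_one e)).symm
        rw [h2, h3]
      simp [prev, h1]
  let C : Matrix (Fin (e+1) × Fin n) (Fin (e+1) × Fin n) k :=
    fun p q => if q.1 = prev p.1 then Mb p.1 p.2 q.2 else 0
  -- the companion matrix is invertible
  have hCmv : ∀ x : Fin (e+1) × Fin n → k, ∀ i a,
      (C.mulVec x) (i, a) = ∑ b, Mb i a b * x (prev i, b) := by
    intro x i a
    simp only [Matrix.mulVec, dotProduct, C]
    rw [Fintype.sum_prod_type, Finset.sum_comm]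
    simp [ite_mul, zero_mul, Finset.sum_ite_eq']
  have hC : IsUnit C := by
    rw [← Matrix.mulVec_injective_iff_isUnit]
    intro x y hxy
    have hsub : C.mulVec (x - y) = 0 := by
      rw [Matrix.mulVec_sub, hxy, sub_self]
    have hz : ∀ i, (fun b => (x - y) (prev i, b)) = 0 := by
      intro i
      have h0 : (Mb i).mulVec (fun b => (x - y) (prev i, b)) = 0 := by
        funext a
        have := congrFun hsub (i, a)
        rw [hCmv (x - y) i a] at this
        simpa [Matrix.mulVec, dotProduct] using this
      have hinj := Matrix.mulVec_injective_iff_isUnit.mpr (hMb i)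
      have : (Mb i).mulVec (fun b => (x - y) (prev i, b)) = (Mb i).mulVec 0 := by
        rw [h0, Matrix.mulVec_zero]
      exact hinj this
    have : x - y = 0 := by
      funext p
      obtain ⟨j, b⟩ := p
      obtain ⟨i, rfl⟩ := hprev j
      exact congrFun (hz i) b
    exact sub_eq_zero.mp this
  -- solve the companion system using σ-closedness
  have hdn : 1 ≤ (e+1) * n := Nat.one_le_iff_ne_zero.mpr (by positivity)
  let E : (Fin (e+1) × Fin n) ≃ Fin ((e+1) * n) := finProdFinEquiv
  have hC' : IsUnit (C.submatrix ⇑E.symm ⇑E.symm) := by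
    have := hC.map (Matrix.reindexAlgEquiv k k E)
    simpa [Matrix.reindexAlgEquiv_apply, Matrix.reindex_apply] using this
  obtain ⟨Z', hZ', hσZ'⟩ := hclosed ((e+1)*n) hdn (C.submatrix ⇑E.symm ⇑E.symm) hC'
  set Z : Matrix (Fin (e+1) × Fin n) (Fin (e+1) × Fin n) k := Z'.submatrix ⇑E ⇑E with hZdef
  have hZ : IsUnit Z := by
    have := hZ'.map (Matrix.reindexAlgEquiv k k E.symm)
    simpa [Matrix.reindexAlgEquiv_apply, Matrix.reindex_apply, hZdef] using this
  have hσZ : Z.map ⇑σ = C * Z := by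
    have h1 : Z.map ⇑σ = (Z'.map ⇑σ).submatrix ⇑E ⇑E := by
      rw [hZdef, Matrix.submatrix_map]
    rw [h1, hσZ', ← Matrix.submatrix_mul_equiv (C.submatrix ⇑E.symm ⇑E.symm) Z' ⇑E E ⇑E]
    simp [Matrix.submatrix_submatrix, Equiv.symm_comp_self, Matrix.submatrix_id_id, hZdef]
  -- entrywise relations
  have hrel : ∀ (i : Fin (e+1)) (a : Fin n) (q : Fin (e+1) × Fin n),
      σ (Z (i,a) q) = ∑ b, Mb i a b * Z (prev i, b) q := by
    intro i a q
    have h1 : (Z.map ⇑σ) (i,a) q = (C * Z) (i,a) q := by rw [hσZ]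
    rw [Matrix.map_apply] at h1
    rw [h1, Matrix.mul_apply, Fintype.sum_prod_type, Finset.sum_comm]
    simp [C, ite_mul, zero_mul, Finset.sum_ite_eq']
  have hrel1 : ∀ (i : Fin (e+1)), i ≠ 0 → ∀ a q, σ (Z (i,a) q) = Z (i - 1, a) q := by
    intro i hi a q
    rw [hrel i a q]
    simp [Mb, prev, hi, Matrix.one_apply, ite_mul, one_mul, zero_mul, Finset.sum_ite_eq]
  set W : Matrix (Fin n) (Fin (e+1) × Fin n) k := fun a q => Z (Fin.last e, a) q with hWdef
  have hWd : ∀ t, ∀ (ht : t ≤ e), ∀ a q,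
      Z (⟨e - t, by omega⟩, a) q = (⇑σ)^[t] (W a q) := by
    intro t
    induction t with
    | zero =>
      intro ht a q
      have : (⟨e - 0, by omega⟩ : Fin (e+1)) = Fin.last e := by
        apply Fin.ext; simp [Fin.last]
      rw [this]
      simp [hWdef]
    | succ t ih =>
      intro ht a q
      have ht' : t ≤ e := by omega
      have hi : (⟨e - t, by omega⟩ : Fin (e+1)) ≠ 0 := by
        simp only [ne_eq, Fin.ext_iff, Fin.val_zero]
        omega
      have hsub : (⟨e - t, by omega⟩ : Fin (e+1)) - 1 = ⟨e - (t+1), by omega⟩ := by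
        rw [sub_eq_iff_eq_add]
        apply Fin.ext
        have h1 : ((1 : Fin (e+1)) : ℕ) = 1 := by
          rw [Fin.val_one']; exact Nat.mod_eq_of_lt (by omega)
        rw [Fin.val_add, h1]
        show e - t = (e - (t+1) + 1) % (e+1)
        rw [Nat.mod_eq_of_lt (by omega)]
        omega
      rw [← hsub, ← hrel1 _ hi a q, ih ht' a q, ← Function.iterate_succ_apply' ⇑σ t]
  have hfinal : W.map ((⇑σ)^[e+1]) = B * W := by
    funext a q
    rw [Matrix.map_apply, Matrix.mul_apply]
    have h0 : σ (Z (0, a) q) = ∑ b, B a b * W b q := by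
      have := hrel 0 a q
      simpa [Mb, prev, hWdef] using this
    have hz0 : Z (0, a) q = (⇑σ)^[e] (W a q) := by
      have h1 := hWd e le_rfl a q
      have h2 : (⟨e - e, by omega⟩ : Fin (e+1)) = 0 := by
        apply Fin.ext; simp
      rwa [h2] at h1
    rw [Function.iterate_succ_apply', ← hz0, h0]
  have hWs : Function.Surjective W.mulVec := by
    intro v
    obtain ⟨x, hx⟩ := Matrix.mulVec_surjective_iff_isUnit.mpr hZ
      (fun p => if p.1 = Fin.last e then v p.2 else 0)
    refine ⟨x, ?_⟩
    funext a
    have h1 : (W.mulVec x) a = (Z.mulVec x) (Fin.last e, a) := rfl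
    rw [h1, hx]
    simp
  obtain ⟨φ, hY⟩ := exists_isUnit_submatrix W hWs
  refine ⟨W.submatrix id φ, hY, ?_⟩
  rw [← Matrix.submatrix_map ((⇑σ)^[e+1]) id φ W, hfinal]
  have h2 := Matrix.submatrix_mul_equiv B W (id : Fin n → Fin n) (Equiv.refl (Fin n)) φ
  simpa using h2.symm
end

section
/- Let f : ℂ → ℂ be meromorphic at every point of ℂ. Suppose f is algebraic over the field ℂ(x) of rational functions: there exist an integer n ≥ 1, rational functions c₀,…,c_{n−1} ∈ ℂ(X), and a closed subset E ⊂ ℂ with no accumulation point in ℂ (containing the poles of the c_i) such that f(z)^n + Σ_{i=0}^{n−1} c_i(z)·f(z)^i = 0 for all z ∈ ℂ∖E. Then f is rational: there exist a rational function r ∈ ℂ(X) and a closed subset D ⊂ ℂ with no accumulation point in ℂ such that f(z) = r(z) for all z ∈ ℂ∖D. -/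
open Filter Topology Polynomial Metric

lemma aux_no_acc_eventually {S : Set ℂ} (h : ∀ z : ℂ, ¬ AccPt z (𝓟 S)) (z₀ : ℂ) :
    ∀ᶠ w in 𝓝[≠] z₀, w ∉ S := by
  have h' := h z₀
  rw [accPt_iff_frequently, Filter.not_frequently] at h'
  have h'' : ∀ᶠ w in 𝓝[≠] z₀, ¬(w ≠ z₀ ∧ w ∈ S) := h'.filter_mono nhdsWithin_le_nhds
  filter_upwards [h'', self_mem_nhdsWithin] with w hw hne
  exact fun hS => hw ⟨hne, hS⟩

lemma aux_closed_of_no_acc {S : Set ℂ} (h : ∀ z : ℂ, ¬ AccPt z (𝓟 S)) : IsClosed S := by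
  rw [← closure_subset_iff_isClosed]
  intro z hz
  by_contra hzS
  refine h z (accPt_iff_nhds.2 fun U hU => ?_)
  obtain ⟨y, hyU, hyS⟩ := mem_closure_iff_nhds.1 hz U hU
  exact ⟨y, ⟨hyU, hyS⟩, fun hyz => hzS (hyz ▸ hyS)⟩

lemma aux_acc_union {A B : Set ℂ} {z : ℂ} (h : AccPt z (𝓟 (A ∪ B))) :
    AccPt z (𝓟 A) ∨ AccPt z (𝓟 B) := by
  rw [accPt_iff_frequently] at h ⊢
  rw [accPt_iff_frequently (C := B)]
  by_contra hc
  rw [not_or] at hc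
  rw [Filter.not_frequently] at hc
  obtain ⟨hc1, hc2⟩ := hc
  rw [Filter.not_frequently] at hc2
  have := hc1.and hc2
  refine (this.and_frequently h).exists.elim ?_
  rintro y ⟨⟨h1, h2⟩, hy, hAB⟩
  rcases hAB with hA | hB
  · exact h1 ⟨hy, hA⟩
  · exact h2 ⟨hy, hB⟩

lemma aux_finite_no_acc {S : Set ℂ} (hS : S.Finite) (z : ℂ) : ¬ AccPt z (𝓟 S) := by
  rw [accPt_iff_frequently, Filter.not_frequently]
  have hclosed : IsClosed (S \ {z}) := (hS.subset Set.diff_subset).isClosed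
  have hop : IsOpen (S \ {z})ᶜ := hclosed.isOpen_compl
  have hz : z ∈ (S \ {z})ᶜ := by simp
  filter_upwards [hop.mem_nhds hz] with w hw
  rintro ⟨hne, hS'⟩
  exact hw ⟨hS', hne⟩

lemma aux_dense_compl {S : Set ℂ} (h : ∀ z : ℂ, ¬ AccPt z (𝓟 S)) : Dense Sᶜ := by
  intro z
  rw [mem_closure_iff_nhds]
  intro U hU
  by_contra hc
  push_neg at hc
  have hUS : U ⊆ S := fun y hy => by
    by_contra hyS
    exact Set.eq_empty_iff_forall_notMem.1 hc y ⟨hy, hyS⟩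
  refine h z (accPt_iff_nhds.2 fun V hV => ?_)
  have : V ∩ U ∈ 𝓝 z := Filter.inter_mem hV hU
  have h2 : (V ∩ U) \ {z} ∈ 𝓝[≠] z := diff_mem_nhdsWithin_compl this {z}
  obtain ⟨y, hy⟩ := Filter.nonempty_of_mem h2
  exact ⟨y, ⟨hy.1.1, hUS hy.1.2⟩, hy.2⟩

lemma aux_root_bound {n : ℕ} (hn : 1 ≤ n) (x : ℂ) (a : Fin n → ℂ)
    (h : x ^ n + ∑ i : Fin n, a i * x ^ (i : ℕ) = 0) : ‖x‖ ≤ 1 + ∑ i : Fin n, ‖a i‖ := by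
  set S : ℝ := ∑ i : Fin n, ‖a i‖ with hS
  have hS0 : 0 ≤ S := Finset.sum_nonneg fun i _ => norm_nonneg _
  by_contra hx
  push_neg at hx
  have h1 : (1 : ℝ) ≤ ‖x‖ := by linarith
  have hkey : ‖x‖ ^ n ≤ S * ‖x‖ ^ (n - 1) := by
    have hx_eq : x ^ n = -∑ i : Fin n, a i * x ^ (i : ℕ) := by linear_combination h
    calc ‖x‖ ^ n = ‖x ^ n‖ := (norm_pow x n).symm
      _ = ‖∑ i : Fin n, a i * x ^ (i : ℕ)‖ := by rw [hx_eq, norm_neg]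
      _ ≤ ∑ i : Fin n, ‖a i * x ^ (i : ℕ)‖ := norm_sum_le _ _
      _ ≤ ∑ i : Fin n, ‖a i‖ * ‖x‖ ^ (n - 1) := by
          refine Finset.sum_le_sum fun i _ => ?_
          rw [norm_mul, norm_pow]
          exact mul_le_mul_of_nonneg_left
            (pow_le_pow_right₀ h1 (by omega : (i : ℕ) ≤ n - 1)) (norm_nonneg _)
      _ = S * ‖x‖ ^ (n - 1) := by rw [← Finset.sum_mul]
  have hxpow : ‖x‖ ^ n = ‖x‖ ^ (n - 1) * ‖x‖ := by
    rw [← pow_succ]; congr 1; omega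
  have hpos : 0 < ‖x‖ ^ (n - 1) := pow_pos (by linarith) _
  rw [hxpow] at hkey
  have : ‖x‖ ≤ S := by
    have := (mul_le_mul_iff_right₀ hpos).1 (by linarith [hkey] : ‖x‖ ^ (n-1) * ‖x‖ ≤ ‖x‖ ^ (n-1) * S)
    linarith
  linarith

lemma aux_poly_eval_bound (p : Polynomial ℂ) (z : ℂ) :
    ‖p.eval z‖ ≤ (∑ k ∈ Finset.range (p.natDegree + 1), ‖p.coeff k‖) * (1 + ‖z‖) ^ p.natDegree := by
  rw [eval_eq_sum_range]
  calc ‖∑ k ∈ Finset.range (p.natDegree + 1), p.coeff k * z ^ k‖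
      ≤ ∑ k ∈ Finset.range (p.natDegree + 1), ‖p.coeff k * z ^ k‖ := norm_sum_le _ _
    _ ≤ ∑ k ∈ Finset.range (p.natDegree + 1), ‖p.coeff k‖ * (1 + ‖z‖) ^ p.natDegree := by
        refine Finset.sum_le_sum fun k hk => ?_
        rw [norm_mul, norm_pow]
        refine mul_le_mul_of_nonneg_left ?_ (norm_nonneg _)
        calc ‖z‖ ^ k ≤ (1 + ‖z‖) ^ k := by
              refine pow_le_pow_left₀ (norm_nonneg _) (by linarith) _
          _ ≤ (1 + ‖z‖) ^ p.natDegree :=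
              pow_le_pow_right₀ (by linarith [norm_nonneg z]) (by
                simp only [Finset.mem_range] at hk; omega)
    _ = _ := by rw [← Finset.sum_mul]

lemma aux_family_poly_bound {n : ℕ} (p : Fin n → Polynomial ℂ) :
    ∃ (C : ℝ) (N : ℕ), 0 ≤ C ∧ ∀ z : ℂ, 1 + ∑ i : Fin n, ‖(p i).eval z‖ ≤ C * (1 + ‖z‖) ^ N := by
  set N : ℕ := ∑ i : Fin n, (p i).natDegree with hN
  set Ci : Fin n → ℝ := fun i => ∑ k ∈ Finset.range ((p i).natDegree + 1), ‖(p i).coeff k‖ with hCi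
  have hCi0 : ∀ i, 0 ≤ Ci i := fun i => Finset.sum_nonneg fun k _ => norm_nonneg _
  refine ⟨1 + ∑ i : Fin n, Ci i, N, by positivity, fun z => ?_⟩
  have hb : (1:ℝ) ≤ 1 + ‖z‖ := by linarith [norm_nonneg z]
  have h1 : (1:ℝ) ≤ (1 + ‖z‖) ^ N := one_le_pow₀ hb
  have hterm : ∀ i : Fin n, ‖(p i).eval z‖ ≤ Ci i * (1 + ‖z‖) ^ N := fun i =>
    (aux_poly_eval_bound (p i) z).trans (mul_le_mul_of_nonneg_left
      (pow_le_pow_right₀ hb (Finset.single_le_sum (f := fun i => (p i).natDegree)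
        (fun i _ => Nat.zero_le _) (Finset.mem_univ i))) (hCi0 i))
  calc 1 + ∑ i : Fin n, ‖(p i).eval z‖
      ≤ (1 + ‖z‖) ^ N + ∑ i : Fin n, Ci i * (1 + ‖z‖) ^ N := by
        exact add_le_add h1 (Finset.sum_le_sum fun i _ => hterm i)
    _ = (1 + ∑ i : Fin n, Ci i) * (1 + ‖z‖) ^ N := by rw [add_mul, one_mul, Finset.sum_mul]

lemma aux_entire_poly_growth (N : ℕ) :
    ∀ (g : ℂ → ℂ), Differentiable ℂ g → ∀ C : ℝ,
      (∀ z : ℂ, ‖g z‖ ≤ C * (1 + ‖z‖) ^ N) → ∃ p : Polynomial ℂ, ∀ z, g z = p.eval z := by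
  induction N with
  | zero =>
    intro g hg C hb
    obtain ⟨c, hc⟩ := hg.exists_eq_const_of_bounded (by
      rw [isBounded_iff_forall_norm_le]
      exact ⟨C, by rintro x ⟨z, rfl⟩; simpa using hb z⟩)
    exact ⟨Polynomial.C c, fun z => by simp [hc]⟩
  | succ N ih =>
    intro g hg C hb
    have hC : 0 ≤ C := by
      have := hb 0
      simp only [norm_zero, add_zero, one_pow, mul_one] at this
      linarith [norm_nonneg (g 0)]
    set h : ℂ → ℂ := dslope g 0 with hh
    have hdiff : Differentiable ℂ h := by
      rw [← differentiableOn_univ]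
      exact (Complex.differentiableOn_dslope (Filter.univ_mem)).2 hg.differentiableOn
    obtain ⟨M, hM⟩ := (isCompact_closedBall (0 : ℂ) 1).exists_bound_of_continuousOn
      hdiff.continuous.continuousOn
    have hM0 : 0 ≤ M := le_trans (norm_nonneg _) (hM 0 (by simp))
    have hg0 : ‖g 0‖ ≤ C := by
      have := hb 0; simpa using this
    have key : ∀ z : ℂ, ‖h z‖ ≤ (M + 4 * C) * (1 + ‖z‖) ^ N := by
      intro z
      have hb1 : (1:ℝ) ≤ 1 + ‖z‖ := by linarith [norm_nonneg z]
      have hA1 : (1:ℝ) ≤ (1 + ‖z‖) ^ N := one_le_pow₀ hb1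
      rcases le_or_gt ‖z‖ 1 with hz1 | hz1
      · have : ‖h z‖ ≤ M := hM z (by simpa [Metric.mem_closedBall] using hz1)
        nlinarith
      · have hz0 : z ≠ 0 := by
          intro hz; rw [hz] at hz1; simp at hz1; linarith
        have hzpos : (0:ℝ) < ‖z‖ := by linarith
        have hzval : h z = (g z - g 0) / z := by
          rw [hh, dslope_of_ne _ hz0, slope_def_field]; simp
        rw [hzval, norm_div]
        rw [div_le_iff₀ hzpos]
        have hgz : ‖g z‖ ≤ C * ((1 + ‖z‖) ^ N * (1 + ‖z‖)) := by
          have := hb z; rwa [pow_succ] at this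
        have htri : ‖g z - g 0‖ ≤ ‖g z‖ + ‖g 0‖ := norm_sub_le _ _
        set A : ℝ := (1 + ‖z‖) ^ N with hA
        have hA0 : (0:ℝ) ≤ A := by linarith
        have h1 : 0 ≤ (‖z‖ - 1) * (C * A) :=
          mul_nonneg (by linarith) (mul_nonneg hC hA0)
        have h2 : 0 ≤ (‖z‖ * A - 1) * C :=
          mul_nonneg (by nlinarith) hC
        have h3 : 0 ≤ M * (A * ‖z‖) := by positivity
        nlinarith
    obtain ⟨p, hp⟩ := ih h hdiff _ key
    refine ⟨Polynomial.C (g 0) + Polynomial.X * p, fun z => ?_⟩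
    have hgz : g z = g 0 + z * h z := by
      rcases eq_or_ne z 0 with rfl | hz
      · simp
      · rw [hh, dslope_of_ne _ hz, slope_def_field]
        field_simp
        ring
    rw [hgz, hp z]
    simp

lemma aux_glue (g : ℂ → ℂ) (hg : ∀ z : ℂ, MeromorphicAt g z)
    (hbd : ∀ z₀ : ℂ, ∃ B : ℝ, ∀ᶠ w in 𝓝[≠] z₀, ‖g w‖ ≤ B) :
    ∃ (G : ℂ → ℂ) (Bad : Set ℂ), Differentiable ℂ G ∧
      (∀ z : ℂ, ¬ AccPt z (𝓟 Bad)) ∧ ∀ z ∉ Bad, G z = g z := by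
  classical
  set Bad : Set ℂ := {z | ¬ AnalyticAt ℂ g z} with hBad
  set G : ℂ → ℂ := fun z => limUnder (𝓝[≠] z) g with hG
  have hGg : ∀ z ∉ Bad, G z = g z := by
    intro z hz
    rw [hBad, Set.mem_setOf_eq, not_not] at hz
    exact Filter.Tendsto.limUnder_eq hz.continuousAt.continuousWithinAt
  have hBadacc : ∀ z : ℂ, ¬ AccPt z (𝓟 Bad) := by
    intro z hz
    rw [accPt_iff_frequently] at hz
    have hev : ∀ᶠ w in 𝓝[≠] z, w ∉ Bad :=
      ((hg z).eventually_analyticAt).mono fun w hw => by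
        simp only [hBad, Set.mem_setOf_eq, not_not]; exact hw
    rw [eventually_nhdsWithin_iff] at hev
    obtain ⟨y, ⟨hy1, hy2⟩, hy3⟩ := (hz.and_eventually hev).exists
    exact (hy3 hy1) hy2
  refine ⟨G, Bad, ?_, hBadacc, hGg⟩
  intro z₀
  by_cases hz₀ : z₀ ∈ Bad
  · obtain ⟨B, hB⟩ := hbd z₀
    have hev : ∀ᶠ w in 𝓝[≠] z₀, AnalyticAt ℂ g w ∧ ‖g w‖ ≤ B :=
      ((hg z₀).eventually_analyticAt).and hB
    rw [eventually_nhdsWithin_iff] at hev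
    obtain ⟨ε, hε, hball⟩ := Metric.eventually_nhds_iff_ball.1 hev
    have hsub : ∀ w ∈ ball z₀ ε \ {z₀}, AnalyticAt ℂ g w ∧ ‖g w‖ ≤ B := fun w hw =>
      hball w hw.1 (by simpa using hw.2)
    have hdOn : DifferentiableOn ℂ g (ball z₀ ε \ {z₀}) := fun w hw =>
      ((hsub w hw).1.differentiableAt).differentiableWithinAt
    have hbdd : BddAbove (norm ∘ g '' (ball z₀ ε \ {z₀})) := by
      refine ⟨B, ?_⟩
      rintro x ⟨w, hw, rfl⟩
      exact (hsub w hw).2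
    have H := Complex.differentiableOn_update_limUnder_of_bddAbove
      (Metric.ball_mem_nhds z₀ hε) hdOn hbdd
    have hDA : DifferentiableAt ℂ (Function.update g z₀ (limUnder (𝓝[≠] z₀) g)) z₀ :=
      H.differentiableAt (Metric.ball_mem_nhds z₀ hε)
    have hGeq : G =ᶠ[𝓝 z₀] Function.update g z₀ (limUnder (𝓝[≠] z₀) g) := by
      filter_upwards [Metric.ball_mem_nhds z₀ hε] with w hw
      rcases eq_or_ne w z₀ with rfl | hne
      · simp [hG, Function.update_self]
      · have hwgood : w ∉ Bad := by
          simp only [hBad, Set.mem_setOf_eq, not_not]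
          exact (hball w hw hne).1
        rw [Function.update_of_ne hne, hGg w hwgood]
    exact (hGeq.differentiableAt_iff).2 hDA
  · have hopen : ∀ᶠ w in 𝓝 z₀, w ∉ Bad := by
      have hz₀' : AnalyticAt ℂ g z₀ := not_not.1 hz₀
      exact hz₀'.eventually_analyticAt.mono fun w hw => by
        simp only [hBad, Set.mem_setOf_eq, not_not]; exact hw
    have hGeq : G =ᶠ[𝓝 z₀] g := hopen.mono fun w hw => hGg w hw
    exact (hGeq.differentiableAt_iff).2 (not_not.1 hz₀).differentiableAt

/-- `ℂ(x)` is relatively algebraically closed in the field of meromorphic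
functions on `ℂ`.  If `f : ℂ → ℂ` is meromorphic at every point and satisfies a monic
algebraic equation `f^n + Σ cᵢ·f^i = 0` with coefficients `cᵢ ∈ ℂ(X)` away from a closed
set `E` with no accumulation point (containing the poles of the `cᵢ`), then `f` agrees
with a rational function away from some closed set with no accumulation point. -/
theorem stmt_15 (f : ℂ → ℂ)
    (hf : ∀ z : ℂ, MeromorphicAt f z)
    (n : ℕ) (hn : 1 ≤ n) (c : Fin n → RatFunc ℂ)
    (E : Set ℂ) (hEclosed : IsClosed E)
    (hEacc : ∀ z : ℂ, ¬ AccPt z (Filter.principal E))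
    (hpoles : ∀ (i : Fin n) (z : ℂ), Polynomial.eval z (c i).denom = 0 → z ∈ E)
    (heq : ∀ z ∉ E,
      f z ^ n + ∑ i : Fin n, RatFunc.eval (RingHom.id ℂ) z (c i) * f z ^ (i : ℕ) = 0) :
    ∃ (r : RatFunc ℂ) (D : Set ℂ), IsClosed D ∧
      (∀ z : ℂ, ¬ AccPt z (Filter.principal D)) ∧
      ∀ z ∉ D, f z = RatFunc.eval (RingHom.id ℂ) z r := by
  classical
  have heval : ∀ (x : RatFunc ℂ) (z : ℂ),
      RatFunc.eval (RingHom.id ℂ) z x = x.num.eval z / x.denom.eval z := fun x z => rfl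
  -- the common denominator
  set q : Polynomial ℂ := ∏ i : Fin n, (c i).denom with hqdef
  have hq0 : q ≠ 0 := Finset.prod_ne_zero_iff.2 fun i _ => RatFunc.denom_ne_zero (c i)
  have hdvd : ∀ i : Fin n, (c i).denom ∣ q ^ (n - (i : ℕ)) :=
    fun i => (Finset.dvd_prod_of_mem (fun i => (c i).denom) (Finset.mem_univ i)).trans
      (dvd_pow_self q (by omega : n - (i : ℕ) ≠ 0))
  choose t ht using hdvd
  set p : Fin n → Polynomial ℂ := fun i => (c i).num * t i with hpdef
  set g : ℂ → ℂ := fun z => q.eval z * f z with hgdef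
  -- the set of zeros of q
  set Z : Set ℂ := {x | IsRoot q x} with hZdef
  have hZfin : Z.Finite := finite_setOf_isRoot hq0
  have hZacc : ∀ z : ℂ, ¬ AccPt z (𝓟 Z) := aux_finite_no_acc hZfin
  -- pointwise bound for g off E ∪ Z
  have hbound : ∀ z : ℂ, z ∉ E → z ∉ Z → ‖g z‖ ≤ 1 + ∑ i : Fin n, ‖(p i).eval z‖ := by
    intro z hzE hzZ
    have hqz : q.eval z ≠ 0 := fun h => hzZ h
    have hdz : ∀ i : Fin n, (c i).denom.eval z ≠ 0 := fun i h => hzE (hpoles i z h)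
    have hterm : ∀ i : Fin n, (p i).eval z * g z ^ (i : ℕ) =
        q.eval z ^ n * (RatFunc.eval (RingHom.id ℂ) z (c i) * f z ^ (i : ℕ)) := by
      intro i
      have h1 : (c i).denom.eval z * (t i).eval z = q.eval z ^ (n - (i : ℕ)) := by
        have h := congrArg (Polynomial.eval z) (ht i)
        simp only [eval_mul, eval_pow] at h
        exact h.symm
      have h2 : q.eval z ^ n = q.eval z ^ (n - (i : ℕ)) * q.eval z ^ (i : ℕ) := by
        rw [← pow_add]; congr 1; omega
      have key : (p i).eval z * g z ^ (i : ℕ) * (c i).denom.eval z =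
          q.eval z ^ n * ((c i).num.eval z * f z ^ (i : ℕ)) := by
        simp only [hpdef, eval_mul, hgdef, mul_pow]
        linear_combination ((c i).num.eval z * f z ^ (i : ℕ) * q.eval z ^ (i : ℕ)) * h1
          - ((c i).num.eval z * f z ^ (i : ℕ)) * h2
      rw [heval, div_mul_eq_mul_div, ← mul_div_assoc, eq_div_iff (hdz i)]
      exact key
    have heq2 : g z ^ n + ∑ i : Fin n, (p i).eval z * g z ^ (i : ℕ) = 0 := by
      have h0 := heq z hzE
      calc g z ^ n + ∑ i : Fin n, (p i).eval z * g z ^ (i : ℕ)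
          = q.eval z ^ n *
            (f z ^ n + ∑ i : Fin n, RatFunc.eval (RingHom.id ℂ) z (c i) * f z ^ (i : ℕ)) := by
            rw [mul_add, Finset.mul_sum]
            congr 1
            · show g z ^ n = eval z q ^ n * f z ^ n
              rw [hgdef]; simp [mul_pow]
            · exact Finset.sum_congr rfl fun i _ => hterm i
        _ = 0 := by rw [h0, mul_zero]
    exact aux_root_bound hn (g z) (fun i => (p i).eval z) heq2
  -- meromorphy of g
  have hgmero : ∀ z : ℂ, MeromorphicAt g z := by
    intro z
    have hq_an : AnalyticAt ℂ (fun x : ℂ => q.eval x) z :=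
      (AnalyticOnNhd.eval_polynomial (𝕜 := ℂ) q) z (Set.mem_univ z)
    exact hq_an.meromorphicAt.mul (hf z)
  -- eventual bounds for g near every point
  have hbd : ∀ z₀ : ℂ, ∃ B : ℝ, ∀ᶠ w in 𝓝[≠] z₀, ‖g w‖ ≤ B := by
    intro z₀
    set φ : ℂ → ℝ := fun w => 1 + ∑ i : Fin n, ‖(p i).eval w‖ with hφdef
    have hφcont : Continuous φ := by
      apply continuous_const.add
      exact continuous_finset_sum _ fun i _ => ((p i).continuous).norm
    refine ⟨φ z₀ + 1, ?_⟩
    have h1 : ∀ᶠ w in 𝓝[≠] z₀, w ∉ E := aux_no_acc_eventually hEacc z₀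
    have h2 : ∀ᶠ w in 𝓝[≠] z₀, w ∉ Z := aux_no_acc_eventually hZacc z₀
    have h3 : ∀ᶠ w in 𝓝[≠] z₀, φ w < φ z₀ + 1 :=
      (Filter.Tendsto.eventually_lt_const (by linarith) (hφcont.tendsto z₀)).filter_mono
        nhdsWithin_le_nhds
    filter_upwards [h1, h2, h3] with w hw1 hw2 hw3
    exact le_of_lt (lt_of_le_of_lt (hbound w hw1 hw2) hw3)
  -- glue into an entire function
  obtain ⟨G, Bad, hGdiff, hBadacc, hGg⟩ := aux_glue g hgmero hbd
  -- growth bound for G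
  obtain ⟨C, N, hC0, hCb⟩ := aux_family_poly_bound p
  set D : Set ℂ := E ∪ Z ∪ Bad with hDdef
  have hDacc : ∀ z : ℂ, ¬ AccPt z (𝓟 D) := by
    intro z hz
    rcases aux_acc_union hz with h | h
    · rcases aux_acc_union h with h' | h'
      · exact hEacc z h'
      · exact hZacc z h'
    · exact hBadacc z h
  have hGbound : ∀ z : ℂ, ‖G z‖ ≤ C * (1 + ‖z‖) ^ N := by
    have hclosed : IsClosed {z : ℂ | ‖G z‖ ≤ C * (1 + ‖z‖) ^ N} := by
      apply isClosed_le
      · exact hGdiff.continuous.norm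
      · exact (continuous_const.mul ((continuous_const.add continuous_norm).pow N))
    have hsub : Dᶜ ⊆ {z : ℂ | ‖G z‖ ≤ C * (1 + ‖z‖) ^ N} := by
      intro z hz
      simp only [hDdef, Set.compl_union, Set.mem_inter_iff, Set.mem_compl_iff] at hz
      have := hbound z hz.1.1 hz.1.2
      rw [← hGg z hz.2] at this
      exact le_trans this (hCb z)
    intro z
    have : z ∈ closure Dᶜ := (aux_dense_compl hDacc) z
    have h2 : z ∈ closure {z : ℂ | ‖G z‖ ≤ C * (1 + ‖z‖) ^ N} := closure_mono hsub this
    rwa [hclosed.closure_eq] at h2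
  obtain ⟨P, hP⟩ := aux_entire_poly_growth N G hGdiff C hGbound
  -- the rational function
  set r : RatFunc ℂ := algebraMap (Polynomial ℂ) (RatFunc ℂ) P / algebraMap _ _ q with hrdef
  have hqmap : algebraMap (Polynomial ℂ) (RatFunc ℂ) q ≠ 0 := RatFunc.algebraMap_ne_zero hq0
  have hcross : r.num * q = P * r.denom := by
    apply IsFractionRing.injective (Polynomial ℂ) (RatFunc ℂ)
    rw [map_mul, map_mul]
    have hden : algebraMap (Polynomial ℂ) (RatFunc ℂ) r.denom ≠ 0 :=
      RatFunc.algebraMap_ne_zero (RatFunc.denom_ne_zero r)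
    have e1 : r * algebraMap (Polynomial ℂ) (RatFunc ℂ) q =
        algebraMap (Polynomial ℂ) (RatFunc ℂ) P := by
      rw [hrdef, div_mul_cancel₀ _ hqmap]
    have e2 : r * algebraMap (Polynomial ℂ) (RatFunc ℂ) r.denom =
        algebraMap (Polynomial ℂ) (RatFunc ℂ) r.num :=
      (eq_div_iff hden).1 (RatFunc.num_div_denom r).symm
    rw [← e2, mul_right_comm, e1]
  have hdenomdvd : r.denom ∣ q := by
    rw [hrdef]; exact RatFunc.denom_div_dvd P q
  refine ⟨r, D, aux_closed_of_no_acc hDacc, hDacc, ?_⟩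
  intro z hz
  simp only [hDdef, Set.mem_union, not_or] at hz
  obtain ⟨⟨hzE, hzZ⟩, hzB⟩ := hz
  have hqz : q.eval z ≠ 0 := fun h => hzZ h
  have hdz : r.denom.eval z ≠ 0 := by
    obtain ⟨s, hs⟩ := hdenomdvd
    intro h
    apply hqz
    rw [hs, eval_mul, h, zero_mul]
  have hgz : G z = g z := hGg z hzB
  have hPz : G z = P.eval z := hP z
  have hcrossz : r.num.eval z * q.eval z = P.eval z * r.denom.eval z := by
    have := congrArg (Polynomial.eval z) hcross
    simpa [eval_mul] using this
  rw [heval]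
  rw [eq_div_iff hdz]
  have hfz : q.eval z * f z = P.eval z := by rw [← hPz, hgz, hgdef]
  have : f z * r.denom.eval z * q.eval z = r.num.eval z * q.eval z := by
    rw [hcrossz, ← hfz]; ring
  exact mul_right_cancel₀ hqz this
end

section
/- Let p be a prime number, let l ∈ ℕ, and let α₀, α₁, …, α_l ∈ {0, 1, …, p−1} be not all zero. Then there exist integers m ≥ 0 and d ≥ 1, depending only on p, l and the α_i, with the following property: for every commutative ring S, every ring endomorphism σ : S → S, and every unit g ∈ Sˣ satisfying g^p = 1 and ∏_{i=0}^{l} σ^i(g)^{α_i} = 1, one has σ^{m+d}(g) = σ^m(g). -/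
section Aux

/-- If `u ^ p = 1`, then powers of `u` only depend on the exponent mod `p`. -/
lemma pow_zmod_congr {G : Type*} [CommGroup G] {p : ℕ} {u : G} (hu : u ^ p = 1) {x y : ℕ}
    (h : (x : ZMod p) = (y : ZMod p)) : u ^ x = u ^ y := by
  have hx : x ≡ y [MOD p] := (ZMod.natCast_eq_natCast_iff _ _ _).mp h
  have hd : orderOf u ∣ p := orderOf_dvd_of_pow_eq_one hu
  exact pow_eq_pow_iff_modEq.mpr (hx.of_dvd hd)

/-- The companion-type recurrence step on exponent vectors. -/
def stmt19Step (p n : ℕ) (c : ℕ → ZMod p) (v : ℕ → ZMod p) : ℕ → ZMod p :=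
  fun i => (if i = 0 then 0 else v (i - 1)) + c i * v (n - 1)

/-- Initial exponent vector: the indicator of `0`. -/
def stmt19V0 (p : ℕ) : ℕ → ZMod p := fun i => if i = 0 then 1 else 0

/-- Pigeonhole: the iterates of the step map are eventually periodic (restricted to
indices `< n`), uniformly in everything but `p, n, c`. -/
lemma stmt19_exists_rep (p n : ℕ) [NeZero p] (c : ℕ → ZMod p) :
    ∃ m d : ℕ, 1 ≤ d ∧ ∀ i < n,
      (stmt19Step p n c)^[m + d] (stmt19V0 p) i = (stmt19Step p n c)^[m] (stmt19V0 p) i := by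
  obtain ⟨a, b, hab, hfab⟩ := Finite.exists_ne_map_eq_of_infinite
    (fun j : ℕ => (fun i : Fin n => (stmt19Step p n c)^[j] (stmt19V0 p) i))
  rcases Nat.lt_or_ge a b with hlt | hge
  · refine ⟨a, b - a, by omega, fun i hi => ?_⟩
    have : a + (b - a) = b := by omega
    rw [this]
    exact congrFun hfab.symm ⟨i, hi⟩
  · have hlt : b < a := lt_of_le_of_ne hge (Ne.symm hab)
    refine ⟨b, a - b, by omega, fun i hi => ?_⟩
    have : b + (a - b) = a := by omega
    rw [this]
    exact congrFun hfab ⟨i, hi⟩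

/-- Key inductive lemma: each iterate `φ^[j] u` is the monomial in `u, φ u, …, φ^[n-1] u`
prescribed by the exponent-vector recurrence. -/
lemma stmt19_key {G : Type*} [CommGroup G] {p : ℕ} [Fact (1 < p)] {k : ℕ}
    (c : ℕ → ZMod p) (φ : G →* G) (u : G) (hu : u ^ p = 1)
    (hrel : φ^[k + 1] u = ∏ i ∈ Finset.range (k + 1), φ^[i] u ^ (c i).val) :
    ∀ j, φ^[j] u = ∏ i ∈ Finset.range (k + 1),
      φ^[i] u ^ ((stmt19Step p (k + 1) c)^[j] (stmt19V0 p) i).val := by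
  haveI : NeZero p := ⟨by have := (Fact.out : 1 < p); omega⟩
  have hui : ∀ i, (φ^[i] u) ^ p = 1 := by
    intro i
    induction i with
    | zero => simpa using hu
    | succ i ih =>
        rw [Function.iterate_succ_apply', ← map_pow, ih, map_one]
  intro j
  induction j with
  | zero =>
      simp only [Function.iterate_zero, id_eq]
      rw [Finset.prod_eq_single_of_mem 0 (Finset.mem_range.mpr (by omega))]
      · simp [stmt19V0, ZMod.val_one]
      · intro b _ hb
        simp [stmt19V0, hb]
  | succ j ih =>
      set v : ℕ → ZMod p := (stmt19Step p (k + 1) c)^[j] (stmt19V0 p) with hv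
      have hvs : (stmt19Step p (k + 1) c)^[j + 1] (stmt19V0 p) = stmt19Step p (k + 1) c v := by
        rw [Function.iterate_succ_apply', hv]
      rw [hvs]
      -- LHS: apply φ to the inductive hypothesis
      have hlhs : φ^[j + 1] u = ∏ i ∈ Finset.range (k + 1), φ^[i + 1] u ^ (v i).val := by
        rw [Function.iterate_succ_apply', ih, map_prod]
        refine Finset.prod_congr rfl fun i _ => ?_
        rw [map_pow, ← Function.iterate_succ_apply' (⇑φ) i u]
      rw [hlhs]
      -- RHS: split each exponent
      have hsplit : ∀ i ∈ Finset.range (k + 1),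
          φ^[i] u ^ (stmt19Step p (k + 1) c v i).val
            = φ^[i] u ^ ((if i = 0 then (0 : ZMod p) else v (i - 1)).val)
              * (φ^[i] u ^ (c i).val) ^ (v k).val := by
        intro i _
        rw [← pow_mul, ← pow_add]
        refine pow_zmod_congr (hui i) ?_
        have h1 : ∀ a : ZMod p, ((a.val : ℕ) : ZMod p) = a := fun a => ZMod.natCast_rightInverse a
        push_cast [h1]
        simp only [stmt19Step, Nat.add_sub_cancel]
      rw [Finset.prod_congr rfl hsplit, Finset.prod_mul_distrib, Finset.prod_pow, ← hrel]
      -- now both sides: ∏_{i<k+1} φ^[i+1] u ^ (v i).val  =  (∏ shifted) * (φ^[k+1] u)^(v k).val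
      rw [Finset.prod_range_succ (fun i => φ^[i + 1] u ^ (v i).val) k]
      congr 1
      rw [Finset.prod_range_succ' (fun i => φ^[i] u ^ (if i = 0 then (0 : ZMod p) else v (i - 1)).val) k]
      simp

end Aux

/-- pointwise form of the structure of proper σ-closed subgroups of μ_p.
Given a prime `p` and exponents `α₀,…,α_l ∈ {0,…,p−1}` not all zero, there exist
`m ≥ 0` and `d ≥ 1`, depending only on `p`, `l` and the `αᵢ`, such that for every
commutative ring `S`, every ring endomorphism `σ` of `S`, and every unit `g ∈ S` with
`g^p = 1` and `∏_{i≤l} σ^i(g)^{αᵢ} = 1`, one has `σ^{m+d}(g) = σ^m(g)`. -/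
theorem stmt_19 (p : ℕ) (hp : Nat.Prime p) (l : ℕ) (α : ℕ → ℕ)
    (hαlt : ∀ i ≤ l, α i < p) (hαne : ∃ i ≤ l, α i ≠ 0) :
    ∃ (m d : ℕ), 1 ≤ d ∧
      ∀ (S : Type u) [CommRing S] (σ : S →+* S) (g : S),
        IsUnit g → g ^ p = 1 →
        (∏ i ∈ Finset.range (l + 1), (⇑σ)^[i] g ^ α i) = 1 →
        (⇑σ)^[m + d] g = (⇑σ)^[m] g := by
  haveI : Fact p.Prime := ⟨hp⟩
  haveI : Fact (1 < p) := ⟨hp.one_lt⟩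
  haveI : NeZero p := ⟨hp.ne_zero⟩
  classical
  set n := Nat.findGreatest (fun i => α i ≠ 0) l with hn
  obtain ⟨i₀, hi₀l, hi₀⟩ := hαne
  have hnl : n ≤ l := Nat.findGreatest_le l
  have hαn : α n ≠ 0 := Nat.findGreatest_spec (P := fun i => α i ≠ 0) hi₀l hi₀
  have hzero : ∀ i, n < i → i ≤ l → α i = 0 := by
    intro i h1 h2
    by_contra h
    exact Nat.findGreatest_is_greatest h1 h2 h
  have hαncast : (α n : ZMod p) ≠ 0 := by
    intro h
    have := ZMod.val_cast_of_lt (hαlt n hnl)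
    rw [h, ZMod.val_zero] at this
    exact hαn this.symm
  rcases Nat.eq_zero_or_pos n with hn0 | hnpos
  · -- degenerate case: the relation is g ^ α 0 = 1, forcing g = 1
    refine ⟨0, 1, le_refl 1, ?_⟩
    intro S _ σ g hg hgp hprod
    obtain ⟨w, rfl⟩ := hg
    have hwp : w ^ p = 1 := by
      apply Units.ext
      rw [Units.val_pow_eq_pow_val, hgp, Units.val_one]
    have hα0 : (w : S) ^ α 0 = 1 := by
      have heq : ∏ i ∈ Finset.range (l + 1), (⇑σ)^[i] (↑w : S) ^ α i
          = (⇑σ)^[0] (↑w : S) ^ α 0 := by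
        refine Finset.prod_eq_single_of_mem 0 (Finset.mem_range.mpr (Nat.succ_pos l)) ?_
        intro b hb hb0
        have hbl : b ≤ l := by have := Finset.mem_range.mp hb; omega
        have hb' : α b = 0 := hzero b (by omega) hbl
        rw [hb', pow_zero]
      rw [← hprod, heq]
      simp
    have hwα : w ^ α 0 = 1 := by
      apply Units.ext
      rw [Units.val_pow_eq_pow_val, hα0, Units.val_one]
    rw [hn0] at hαncast
    have hw1 : w = 1 := by
      calc w = w ^ 1 := (pow_one w).symm
        _ = w ^ (α 0 * ((α 0 : ZMod p)⁻¹).val) := by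
            refine pow_zmod_congr hwp ?_
            have h1 : ∀ a : ZMod p, ((a.val : ℕ) : ZMod p) = a := fun a => ZMod.natCast_rightInverse a
            push_cast [h1]
            rw [mul_inv_cancel₀ hαncast]
        _ = (w ^ α 0) ^ ((α 0 : ZMod p)⁻¹).val := pow_mul _ _ _
        _ = 1 := by rw [hwα, one_pow]
      
    simp [hw1]
  · obtain ⟨k, hk⟩ : ∃ k, n = k + 1 := ⟨n - 1, by omega⟩
    set c : ℕ → ZMod p := fun i => -(α i : ZMod p) * (α n : ZMod p)⁻¹ with hc
    obtain ⟨m, d, hd, hrep⟩ := stmt19_exists_rep p (k + 1) c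
    refine ⟨m, d, hd, ?_⟩
    intro S _ σ g hg hgp hprod
    obtain ⟨w, rfl⟩ := hg
    set φ : Sˣ →* Sˣ := Units.map σ.toMonoidHom with hφ
    have hcoe : ∀ j, ((φ^[j] w : Sˣ) : S) = (⇑σ)^[j] (↑w : S) := by
      intro j
      induction j with
      | zero => rfl
      | succ j ih =>
          rw [Function.iterate_succ_apply', Function.iterate_succ_apply', ← ih, hφ]
          rfl
    have hwp : w ^ p = 1 := by
      apply Units.ext
      rw [Units.val_pow_eq_pow_val, hgp, Units.val_one]
    have hwip : ∀ i, (φ^[i] w) ^ p = 1 := by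
      intro i
      induction i with
      | zero => simpa using hwp
      | succ i ih => rw [Function.iterate_succ_apply', ← map_pow, ih, map_one]
    -- transfer the multiplicative relation to the unit group
    have hprodU : ∏ i ∈ Finset.range (n + 1), (φ^[i] w) ^ α i = 1 := by
      apply Units.ext
      have hval : ((∏ i ∈ Finset.range (n + 1), (φ^[i] w) ^ α i : Sˣ) : S)
          = ∏ i ∈ Finset.range (n + 1), (⇑σ)^[i] (↑w : S) ^ α i := by
        rw [show ((↑(∏ i ∈ Finset.range (n + 1), (φ^[i] w) ^ α i) : S))
            = ∏ i ∈ Finset.range (n + 1), ((((φ^[i] w) ^ α i : Sˣ)) : S) from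
          map_prod (Units.coeHom S) _ _]
        exact Finset.prod_congr rfl fun i _ => by
          rw [Units.val_pow_eq_pow_val, hcoe i]
      have hrestrict : ∏ i ∈ Finset.range (n + 1), (⇑σ)^[i] (↑w : S) ^ α i
          = ∏ i ∈ Finset.range (l + 1), (⇑σ)^[i] (↑w : S) ^ α i := by
        refine Finset.prod_subset (Finset.range_subset_range.mpr (by omega)) ?_
        intro x hx hnx
        have hx' : x ≤ l := by have := Finset.mem_range.mp hx; omega
        have hnx' : n < x := by
          by_contra h
          exact hnx (Finset.mem_range.mpr (by omega))
        rw [hzero x hnx' hx', pow_zero]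
      rw [hval, hrestrict, hprod, Units.val_one]
    have hprodn := hprodU
    rw [Finset.prod_range_succ] at hprodn
    have hwn : (φ^[n] w) ^ α n = (∏ i ∈ Finset.range n, (φ^[i] w) ^ α i)⁻¹ := by
      rw [eq_inv_iff_mul_eq_one, mul_comm]
      exact hprodn
    have h1 : ∀ a : ZMod p, ((a.val : ℕ) : ZMod p) = a := fun a => ZMod.natCast_rightInverse a
    set b := ((α n : ZMod p)⁻¹).val with hb
    have hrel : φ^[n] w = ∏ i ∈ Finset.range n, (φ^[i] w) ^ (c i).val := by
      calc φ^[n] w = (φ^[n] w) ^ 1 := (pow_one _).symm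
        _ = (φ^[n] w) ^ (α n * b) := by
            refine pow_zmod_congr (hwip n) ?_
            push_cast [h1, hb]
            rw [mul_inv_cancel₀ hαncast]
        _ = ((φ^[n] w) ^ α n) ^ b := pow_mul _ _ _
        _ = (∏ i ∈ Finset.range n, (φ^[i] w) ^ α i)⁻¹ ^ b := by rw [hwn]
        _ = ∏ i ∈ Finset.range n, ((φ^[i] w) ^ (α i * b))⁻¹ := by
            rw [inv_pow, ← Finset.prod_pow (Finset.range n) b (fun i => (φ^[i] w) ^ α i),
              ← Finset.prod_inv_distrib]
            exact Finset.prod_congr rfl fun i _ => by rw [← pow_mul]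
        _ = ∏ i ∈ Finset.range n, (φ^[i] w) ^ (c i).val := by
            refine Finset.prod_congr rfl fun i _ => ?_
            have hmul : (φ^[i] w) ^ (c i).val * (φ^[i] w) ^ (α i * b) = 1 := by
              rw [← pow_add]
              have := pow_zmod_congr (u := φ^[i] w) (hwip i)
                (x := (c i).val + α i * b) (y := 0) (by
                  push_cast [h1, hb, hc]
                  ring)
              rw [this, pow_zero]
            exact inv_eq_of_mul_eq_one_left hmul
    have hrel' : φ^[k + 1] w = ∏ i ∈ Finset.range (k + 1), (φ^[i] w) ^ (c i).val := by
      rw [← hk]; exact hrel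
    have hkey := stmt19_key c φ w hwp hrel'
    have hmain : φ^[m + d] w = φ^[m] w := by
      rw [hkey (m + d), hkey m]
      exact Finset.prod_congr rfl fun i hi => by
        rw [hrep i (Finset.mem_range.mp hi)]
    rw [← hcoe, ← hcoe, hmain]
end
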